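/- arXiv:math/0306125 — 2 statements merged into one kernel-verified Lean document; each statement's English description precedes it below -/
import Mathlib

section
/- Let r ≥ 0, let D ∈ D_n be a Dyck word, and let D' = Ψ_r(D). Then the number of tunnels of D with midpoint in x > n+r (i.e., decompositions D = AuBdC with B a Dyck word and length(A) > length(C) + 2r) equals the number of even rises of D' in x > 2r (i.e., u-steps of D' at even positions i with i > 2r). -/
attribute [local instance] Classical.propDecidable

namespace DyckBij

/-- A word over `Bool` (`true` = up-step `u`, `false` = down-step `d`) is a Dyck word:
equally many `u`'s and `d`'s, and every prefix has at least as many `u`'s as `d`'s. -/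
def IsDyck (w : List Bool) : Prop :=
  w.count false = w.count true ∧
    ∀ p : List Bool, p <+: w → p.count false ≤ p.count true

/-- `Matched w i j`: the `u` at (0-indexed) position `i` of `w` is matched (as in matched
parentheses) with the `d` at position `j`, i.e. `w = A u B d C` with `B` a Dyck word,
`|A| = i` and `j = i + |B| + 1`. -/
def Matched (w : List Bool) (i j : ℕ) : Prop :=
  ∃ A B C : List Bool, IsDyck B ∧ w = A ++ true :: (B ++ false :: C) ∧
    A.length = i ∧ j = i + B.length + 1

/-- Positions `i` and `j` form a matched pair of steps of `w`. -/
def MatchPair (w : List Bool) (i j : ℕ) : Prop :=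
  Matched w i j ∨ Matched w j i

/-- The 0-indexed reading order `σ^{(r)}` on a word of length `L`: the first `2r` positions
are read in order, and the remaining positions are read in zigzag
`2r, L-1, 2r+1, L-2, …` (0-indexed). For `r = 0` this is the zigzag order `σ`. -/
def zigR (r L p : ℕ) : ℕ :=
  if p < 2 * r then p
  else if p % 2 = 0 then p / 2 + r
  else L + r - (p + 1) / 2

/-- The bijection `Ψ_r`: the `p`-th letter of `Ψ_r(w)` is `u` iff the match of the
`σ^{(r)}_p`-th step of `w` does not occur among the previously read steps
`σ^{(r)}_0, …, σ^{(r)}_{p-1}`. -/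
noncomputable def psiR (r : ℕ) (w : List Bool) : List Bool :=
  List.ofFn fun p : Fin w.length =>
    if ∃ p' : ℕ, p' < (p : ℕ) ∧
        MatchPair w (zigR r w.length p') (zigR r w.length (p : ℕ))
    then false else true

/-- The bijection `Ψ = Ψ_0`. -/
noncomputable def psi : List Bool → List Bool := psiR 0

/-- Number of tunnels of `w` with `|A| = |C| + 2r` (midpoint at `x = n + r`),
i.e. decompositions `w = A u B d C` with `B` a Dyck word; tunnels are indexed by `|A|`. -/
noncomputable def tunEq (r : ℕ) (w : List Bool) : ℕ :=
  {i : ℕ | ∃ A B C : List Bool, IsDyck B ∧ w = A ++ true :: (B ++ false :: C) ∧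
    A.length = i ∧ A.length = C.length + 2 * r}.ncard

/-- Number of tunnels of `w` with `|A| > |C| + 2r` (midpoint in `x > n + r`). -/
noncomputable def tunGt (r : ℕ) (w : List Bool) : ℕ :=
  {i : ℕ | ∃ A B C : List Bool, IsDyck B ∧ w = A ++ true :: (B ++ false :: C) ∧
    A.length = i ∧ C.length + 2 * r < A.length}.ncard

/-- Number of tunnels of `w` with `|A| ≤ |C| + 2r` (midpoint in `x ≤ n + r`). -/
noncomputable def tunLe (r : ℕ) (w : List Bool) : ℕ :=
  {i : ℕ | ∃ A B C : List Bool, IsDyck B ∧ w = A ++ true :: (B ++ false :: C) ∧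
    A.length = i ∧ A.length ≤ C.length + 2 * r}.ncard

/-- Number of centered tunnels `ct(w)`. -/
noncomputable def ctun (w : List Bool) : ℕ := tunEq 0 w

/-- Number of right tunnels `rt(w)`. -/
noncomputable def rtun (w : List Bool) : ℕ := tunGt 0 w

/-- Number of left tunnels `lt(w)`: tunnels with `|A| < |C|`. -/
noncomputable def ltun (w : List Bool) : ℕ :=
  {i : ℕ | ∃ A B C : List Bool, IsDyck B ∧ w = A ++ true :: (B ++ false :: C) ∧
    A.length = i ∧ A.length < C.length}.ncard

/-- Number of multitunnels of `w` with `|A| = |C| + 2r` (midpoint at `x = n + r`):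
decompositions `w = A B C` with `B` a nonempty Dyck word, indexed by `(|A|, |B|)`. -/
noncomputable def mtunEq (r : ℕ) (w : List Bool) : ℕ :=
  {q : ℕ × ℕ | ∃ A B C : List Bool, IsDyck B ∧ B ≠ [] ∧ w = A ++ B ++ C ∧
    A.length = q.1 ∧ B.length = q.2 ∧ A.length = C.length + 2 * r}.ncard

/-- Number of centered multitunnels `cmt(w)`. -/
noncomputable def cmtun (w : List Bool) : ℕ := mtunEq 0 w

/-- Number of hills `h(w)`: decompositions `w = X u d Y` with `X, Y` Dyck words. -/
noncomputable def numHills (w : List Bool) : ℕ :=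
  {i : ℕ | ∃ X Y : List Bool, IsDyck X ∧ IsDyck Y ∧
    w = X ++ true :: false :: Y ∧ X.length = i}.ncard

/-- Number of hills of `w` lying in `x > 2r`, i.e. with `|X| ≥ 2r`. -/
noncomputable def numHillsAfter (r : ℕ) (w : List Bool) : ℕ :=
  {i : ℕ | ∃ X Y : List Bool, IsDyck X ∧ IsDyck Y ∧
    w = X ++ true :: false :: Y ∧ X.length = i ∧ 2 * r ≤ X.length}.ncard

/-- Number of arches (equivalently, returns) `ret(w)`: decompositions
`w = X (u B d) Y` with `X, B, Y` Dyck words. -/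
noncomputable def numArches (w : List Bool) : ℕ :=
  {i : ℕ | ∃ X B Y : List Bool, IsDyck X ∧ IsDyck B ∧ IsDyck Y ∧
    w = X ++ true :: (B ++ false :: Y) ∧ X.length = i}.ncard

/-- Number of arches of `w` lying in `x ≥ 2r`, i.e. with `|X| ≥ 2r`. -/
noncomputable def numArchesAfter (r : ℕ) (w : List Bool) : ℕ :=
  {i : ℕ | ∃ X B Y : List Bool, IsDyck X ∧ IsDyck B ∧ IsDyck Y ∧
    w = X ++ true :: (B ++ false :: Y) ∧ X.length = i ∧ 2 * r ≤ X.length}.ncard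

/-- Number of odd rises `odr(w)`: `u`-steps at odd 1-indexed positions
(even 0-indexed positions). -/
noncomputable def oddRises (w : List Bool) : ℕ :=
  {p : ℕ | p < w.length ∧ p % 2 = 0 ∧ w.getD p false = true}.ncard

/-- Number of even rises `er(w)`: `u`-steps at even 1-indexed positions
(odd 0-indexed positions). -/
noncomputable def evenRises (w : List Bool) : ℕ :=
  {p : ℕ | p < w.length ∧ p % 2 = 1 ∧ w.getD p false = true}.ncard

/-- Number of odd rises of `w` at 1-indexed positions `> 2r`. -/
noncomputable def oddRisesAfter (r : ℕ) (w : List Bool) : ℕ :=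
  {p : ℕ | p < w.length ∧ p % 2 = 0 ∧ 2 * r ≤ p ∧ w.getD p false = true}.ncard

/-- Number of even rises of `w` at 1-indexed positions `> 2r`. -/
noncomputable def evenRisesAfter (r : ℕ) (w : List Bool) : ℕ :=
  {p : ℕ | p < w.length ∧ p % 2 = 1 ∧ 2 * r ≤ p ∧ w.getD p false = true}.ncard

/-- Number of `u`-steps of `w` at 1-indexed positions `≤ 2r`. -/
noncomputable def upstepsBefore (r : ℕ) (w : List Bool) : ℕ :=
  {p : ℕ | p < w.length ∧ p < 2 * r ∧ w.getD p false = true}.ncard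

/-- Number of peaks of `w`: occurrences of the factor `u d`. -/
noncomputable def numPeaks (w : List Bool) : ℕ :=
  {i : ℕ | i + 2 ≤ w.length ∧ w.getD i false = true ∧ w.getD (i + 1) true = false}.ncard

/-- Number of occurrences in `w` of a factor of length 3 beginning with `u`
and ending with `d` (occurrences of `u⋆d`). -/
noncomputable def numUStarD (w : List Bool) : ℕ :=
  {i : ℕ | i + 3 ≤ w.length ∧ w.getD i false = true ∧ w.getD (i + 2) true = false}.ncard

/-- `ih(w)`: 1 if `w` begins with the factor `u d`, else 0. -/
noncomputable def initHill (w : List Bool) : ℕ :=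
  if w.take 2 = [true, false] then 1 else 0

/-- `fh(w)`: 1 if `w = X u d` with `X` a Dyck word, else 0. -/
noncomputable def finHill (w : List Bool) : ℕ :=
  if ∃ X : List Bool, IsDyck X ∧ w = X ++ [true, false] then 1 else 0

/-- `π` avoids the pattern 321. -/
def Avoids321 {n : ℕ} (π : Equiv.Perm (Fin n)) : Prop :=
  ¬ ∃ i j k : Fin n, i < j ∧ j < k ∧ π k < π j ∧ π j < π i

/-- `π` avoids the pattern 132. -/
def Avoids132 {n : ℕ} (π : Equiv.Perm (Fin n)) : Prop :=
  ¬ ∃ i j k : Fin n, i < j ∧ j < k ∧ π i < π k ∧ π k < π j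

/-- Number of fixed points of `π`. -/
noncomputable def fixedPts {n : ℕ} (π : Equiv.Perm (Fin n)) : ℕ :=
  {i : Fin n | π i = i}.ncard

/-- Number of excedances of `π`. -/
noncomputable def excedances {n : ℕ} (π : Equiv.Perm (Fin n)) : ℕ :=
  {i : Fin n | i < π i}.ncard

/-- Number of descents of `π`. -/
noncomputable def descents {n : ℕ} (π : Equiv.Perm (Fin n)) : ℕ :=
  {i : ℕ | ∃ (h1 : i < n) (h2 : i + 1 < n), π ⟨i + 1, h2⟩ < π ⟨i, h1⟩}.ncard

/-- `α_r(π) = #{i : π(i) = i + r}` (stated 0-indexed, equivalent to the 1-indexed version). -/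
noncomputable def alphaStat {n : ℕ} (r : ℕ) (π : Equiv.Perm (Fin n)) : ℕ :=
  {i : Fin n | (π i : ℕ) = (i : ℕ) + r}.ncard

/-- `β_r(π) = #{i : i > r, π(i) = i}` (for 1-indexed `i`; 0-indexed this is `r ≤ i`). -/
noncomputable def betaStat {n : ℕ} (r : ℕ) (π : Equiv.Perm (Fin n)) : ℕ :=
  {i : Fin n | r ≤ (i : ℕ) ∧ π i = i}.ncard

def exc (w : List Bool) (m : ℕ) : ℤ :=
  ((w.take m).count true : ℤ) - ((w.take m).count false : ℤ)

lemma exc_add (w : List Bool) (m t : ℕ) :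
    exc w (m + t) = exc w m + ((((w.drop m).take t).count true : ℤ) -
      (((w.drop m).take t).count false : ℤ)) := by
  unfold exc
  rw [List.take_add, List.count_append, List.count_append]
  push_cast
  ring

lemma exc_succ_true {w : List Bool} {m : ℕ} (hm : m < w.length)
    (h : w.getD m false = true) : exc w (m + 1) = exc w m + 1 := by
  have h1 : (w.drop m).take 1 = [true] := by
    rw [List.drop_eq_getElem_cons hm]
    rw [List.getD_eq_getElem _ _ hm] at h
    simp [h]
  rw [exc_add, h1]
  simp

lemma exc_succ_false {w : List Bool} {m : ℕ} (hm : m < w.length)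
    (h : w.getD m false = false) : exc w (m + 1) = exc w m - 1 := by
  have h1 : (w.drop m).take 1 = [false] := by
    rw [List.drop_eq_getElem_cons hm]
    rw [List.getD_eq_getElem _ _ hm] at h
    simp [h]
  rw [exc_add, h1]
  simp
  ring

lemma exc_nonneg {w : List Bool} (hD : IsDyck w) (m : ℕ) : 0 ≤ exc w m := by
  have := hD.2 (w.take m) (List.take_prefix m w)
  unfold exc
  have : ((w.take m).count false : ℤ) ≤ (w.take m).count true := by exact_mod_cast this
  linarith

lemma exc_length {w : List Bool} (hD : IsDyck w) : exc w w.length = 0 := by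
  unfold exc
  rw [List.take_length]
  have := hD.1
  omega




lemma matched_char {w : List Bool} {i j : ℕ} (h : Matched w i j) :
    i < j ∧ j < w.length ∧ w.getD i false = true ∧ w.getD j false = false ∧
    exc w j = exc w i + 1 ∧ ∀ s, i < s → s ≤ j → exc w i + 1 ≤ exc w s := by
  obtain ⟨A, B, C, hB, hw, hA, hj⟩ := h
  have hlen : w.length = i + B.length + C.length + 2 := by
    subst hw; simp [hA]; omega
  have hij : i < j := by omega
  have hjlen : j < w.length := by omega
  have hilen : i < w.length := by omega
  -- getD i = true
  have hgi : w.getD i false = true := by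
    rw [hw, List.getD_append_right _ _ _ _ (by omega)]
    simp [hA]
  -- getD j = false
  have hw2 : w = (A ++ true :: B) ++ false :: C := by rw [hw]; simp
  have hlen2 : (A ++ true :: B).length = j := by simp [hA]; omega
  have hgj : w.getD j false = false := by
    rw [hw2, List.getD_append_right _ _ _ _ (by omega)]
    simp [hlen2]
  -- drop (i+1) w = B ++ false :: C
  have hdrop : w.drop (i + 1) = B ++ false :: C := by
    have : w = (A ++ [true]) ++ (B ++ false :: C) := by rw [hw]; simp
    conv_lhs => rw [this]
    have hl : (A ++ [true]).length = i + 1 := by simp [hA]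
    rw [← hl, List.drop_left]
  have hsucc : exc w (i + 1) = exc w i + 1 := exc_succ_true hilen hgi
  have hseg : ∀ t, t ≤ B.length →
      exc w (i + 1 + t) = exc w (i + 1) +
        (((B.take t).count true : ℤ) - ((B.take t).count false : ℤ)) := by
    intro t ht
    have := exc_add w (i + 1) t
    rw [hdrop] at this
    rw [List.take_append, Nat.sub_eq_zero_of_le ht] at this
    simpa using this
  refine ⟨hij, hjlen, hgi, hgj, ?_, ?_⟩
  · have := hseg B.length le_rfl
    rw [List.take_length] at this
    have heq : ((B.count true : ℤ) - (B.count false : ℤ)) = 0 := by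
      have := hB.1; omega
    have hj' : i + 1 + B.length = j := by omega
    rw [hj'] at this
    rw [this, heq, hsucc]; ring
  · intro s hs1 hs2
    have ht : s - (i + 1) ≤ B.length := by omega
    have := hseg (s - (i + 1)) ht
    have hs' : i + 1 + (s - (i + 1)) = s := by omega
    rw [hs'] at this
    have hpre := hB.2 (B.take (s - (i + 1))) (List.take_prefix _ _)
    have : exc w s ≥ exc w (i + 1) := by
      rw [this]
      have : ((B.take (s - (i+1))).count false : ℤ) ≤ ((B.take (s - (i+1))).count true : ℤ) := by
        exact_mod_cast hpre
      linarith
    linarith [hsucc]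


lemma matched_of_exc {w : List Bool} {i j : ℕ} (hij : i < j) (hjlen : j < w.length)
    (hgi : w.getD i false = true) (hgj : w.getD j false = false)
    (hexj : exc w j = exc w i + 1)
    (hex : ∀ s, i < s → s ≤ j → exc w i + 1 ≤ exc w s) : Matched w i j := by
  have hilen : i < w.length := lt_trans hij hjlen
  set B : List Bool := (w.drop (i + 1)).take (j - i - 1) with hBdef
  have hBlen : B.length = j - i - 1 := by
    rw [hBdef, List.length_take, List.length_drop]; omega
  -- decomposition
  have e2 : w.drop i = true :: w.drop (i + 1) := by
    rw [List.drop_eq_getElem_cons hilen]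
    rw [List.getD_eq_getElem _ _ hilen] at hgi
    rw [hgi]
  have e4 : w.drop j = false :: w.drop (j + 1) := by
    rw [List.drop_eq_getElem_cons hjlen]
    rw [List.getD_eq_getElem _ _ hjlen] at hgj
    rw [hgj]
  have e3 : w.drop (i + 1) = B ++ w.drop j := by
    conv_lhs => rw [← List.take_append_drop (j - i - 1) (w.drop (i + 1))]
    rw [List.drop_drop, show i + 1 + (j - i - 1) = j from by omega, ← hBdef]
  have hdecomp : w = w.take i ++ true :: (B ++ false :: w.drop (j + 1)) := by
    conv_lhs => rw [← List.take_append_drop i w, e2, e3, e4]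
  -- the segment lemma
  have hseg : ∀ t, t ≤ j - i - 1 →
      ((B.take t).count true : ℤ) - ((B.take t).count false : ℤ)
        = exc w (i + 1 + t) - exc w (i + 1) := by
    intro t ht
    have h1 : B.take t = (w.drop (i + 1)).take t := by
      rw [hBdef, List.take_take, min_eq_left ht]
    have := exc_add w (i + 1) t
    rw [← h1] at this
    linarith
  have hsucc : exc w (i + 1) = exc w i + 1 := exc_succ_true hilen hgi
  have hBD : IsDyck B := by
    constructor
    · have := hseg (j - i - 1) le_rfl
      rw [← hBlen, List.take_length] at this
      have hj' : i + 1 + (j - i - 1) = j := by omega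
      rw [hBlen, hj', hexj, hsucc] at this
      omega
    · intro p hp
      have hplen : p.length ≤ B.length := hp.length_le
      have hpeq : p = B.take p.length := List.prefix_iff_eq_take.mp hp
      have := hseg p.length (by omega)
      rw [← hpeq] at this
      have hs := hex (i + 1 + p.length) (by omega) (by omega)
      have : (p.count false : ℤ) ≤ (p.count true : ℤ) := by
        rw [hsucc] at this
        linarith
      exact_mod_cast this
  refine ⟨w.take i, B, w.drop (j + 1), hBD, hdecomp, ?_, ?_⟩
  · rw [List.length_take]; omega
  · rw [hBlen]; omega

lemma matched_unique_right_aux {w : List Bool} {i j j' : ℕ}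
    (h1 : Matched w i j) (h2 : Matched w i j') (h : j < j') : False := by
  obtain ⟨hij, hjlen, hgi, hgj, hexj, _⟩ := matched_char h1
  obtain ⟨_, _, _, _, _, hex'⟩ := matched_char h2
  have hstep : exc w (j + 1) = exc w j - 1 := exc_succ_false hjlen hgj
  have := hex' (j + 1) (by omega) (by omega)
  linarith

lemma matched_unique_right {w : List Bool} {i j j' : ℕ}
    (h1 : Matched w i j) (h2 : Matched w i j') : j = j' := by
  rcases lt_trichotomy j j' with h | h | h
  · exact absurd (matched_unique_right_aux h1 h2 h) not_false
  · exact h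
  · exact absurd (matched_unique_right_aux h2 h1 h) not_false

lemma matched_unique_left {w : List Bool} {i i' j : ℕ}
    (h1 : Matched w i j) (h2 : Matched w i' j) : i = i' := by
  have aux : ∀ {a b : ℕ}, Matched w a j → Matched w b j → a < b → False := by
    intro a b ha hb hab
    obtain ⟨_, _, _, _, hexa, hexA⟩ := matched_char ha
    obtain ⟨hbj, _, _, _, hexb, _⟩ := matched_char hb
    have := hexA b hab (by omega)
    linarith
  rcases lt_trichotomy i i' with h | h | h
  · exact absurd (aux h1 h2 h) not_false
  · exact h
  · exact absurd (aux h2 h1 h) not_false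

lemma exists_matched_of_true {w : List Bool} (hD : IsDyck w) {i : ℕ}
    (hi : i < w.length) (hw : w.getD i false = true) : ∃ j, Matched w i j := by
  have hP : ∃ m, i < m ∧ exc w m ≤ exc w i := by
    refine ⟨w.length, hi, ?_⟩
    rw [exc_length hD]
    exact exc_nonneg hD i
  obtain ⟨him, hexm⟩ := Nat.find_spec hP
  have hmin : ∀ s, i < s → s < Nat.find hP → exc w i + 1 ≤ exc w s := by
    intro s h1 h2
    have := Nat.find_min hP h2
    push_neg at this
    have := this h1
    omega
  have hmle : Nat.find hP ≤ w.length :=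
    Nat.find_min' hP ⟨hi, by rw [exc_length hD]; exact exc_nonneg hD i⟩
  have hsucc : exc w (i + 1) = exc w i + 1 := exc_succ_true hi hw
  have hm2 : i + 1 < Nat.find hP := by
    rcases Nat.lt_or_ge (i + 1) (Nat.find hP) with h | h
    · exact h
    · exfalso
      have heq : Nat.find hP = i + 1 := by omega
      rw [heq] at hexm
      omega
  have hjm : (Nat.find hP - 1) + 1 = Nat.find hP := by omega
  have hjlen : Nat.find hP - 1 < w.length := by omega
  have hji : i < Nat.find hP - 1 := by omega
  have hjgt : exc w i + 1 ≤ exc w (Nat.find hP - 1) := hmin _ hji (by omega)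
  have hgj : w.getD (Nat.find hP - 1) false = false := by
    cases hgj : w.getD (Nat.find hP - 1) false
    · rfl
    · exfalso
      have h2 := exc_succ_true hjlen hgj
      rw [hjm] at h2
      omega
  have hstep : exc w (Nat.find hP) = exc w (Nat.find hP - 1) - 1 := by
    have h2 := exc_succ_false hjlen hgj
    rw [hjm] at h2
    omega
  have hexj : exc w (Nat.find hP - 1) = exc w i + 1 := by omega
  refine ⟨Nat.find hP - 1, matched_of_exc hji hjlen hw hgj hexj ?_⟩
  intro s h1 h2
  rcases Nat.lt_or_ge s (Nat.find hP) with h | h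
  · rcases Nat.lt_or_ge s (Nat.find hP - 1) with h' | h'
    · exact hmin s h1 h
    · have : s = Nat.find hP - 1 := by omega
      rw [this]; omega
  · omega

lemma exists_matched_of_false {w : List Bool} (hD : IsDyck w) {j : ℕ}
    (hj : j < w.length) (hw : w.getD j false = false) : ∃ i, Matched w i j := by
  have hstep : exc w (j + 1) = exc w j - 1 := exc_succ_false hj hw
  have h0 : exc w 0 ≤ exc w (j + 1) := by
    have : exc w 0 = 0 := by unfold exc; simp
    rw [this]
    exact exc_nonneg hD (j + 1)
  have hspec : exc w (Nat.findGreatest (fun s => exc w s ≤ exc w (j + 1)) j) ≤ exc w (j + 1) :=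
    Nat.findGreatest_spec (P := fun s => exc w s ≤ exc w (j + 1)) (Nat.zero_le j) h0
  set i := Nat.findGreatest (fun s => exc w s ≤ exc w (j + 1)) j with hi
  have hgr : ∀ s, i < s → s ≤ j → exc w (j + 1) + 1 ≤ exc w s := by
    intro s h1 h2
    have h3 : ¬ exc w s ≤ exc w (j + 1) :=
      Nat.findGreatest_is_greatest (P := fun s => exc w s ≤ exc w (j + 1)) h1 h2
    omega
  have hile : i ≤ j := Nat.findGreatest_le j
  have hij : i < j := by
    rcases Nat.lt_or_ge i j with h | h
    · exact h
    · exfalso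
      have : i = j := by omega
      rw [this] at hspec
      omega
  have hilen : i < w.length := by omega
  have hgi : w.getD i false = true := by
    cases hgi : w.getD i false
    · exfalso
      have := exc_succ_false hilen hgi
      have := hgr (i + 1) (by omega) (by omega)
      omega
    · rfl
  have hsucc : exc w (i + 1) = exc w i + 1 := exc_succ_true hilen hgi
  have hieq : exc w i = exc w (j + 1) := by
    have := hgr (i + 1) (by omega) (by omega)
    omega
  have hexj : exc w j = exc w i + 1 := by omega
  refine ⟨i, matched_of_exc hij hj hgi hw hexj ?_⟩
  intro s h1 h2
  have := hgr s h1 h2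
  omega

lemma read_before {n r k x : ℕ} (hk : r ≤ k)
    (hx : x ≤ r + k ∨ (2 * n + r - k ≤ x ∧ x < 2 * n)) :
    ∃ p', p' < 2 * k + 1 ∧ zigR r (2 * n) p' = x := by
  rcases hx with hx | ⟨hx1, hx2⟩
  · rcases Nat.lt_or_ge x (2 * r) with h | h
    · exact ⟨x, by omega, by simp only [zigR]; split_ifs <;> omega⟩
    · refine ⟨2 * (x - r), by omega, ?_⟩
      simp only [zigR]; split_ifs <;> omega
  · refine ⟨2 * ((2 * n - x) + r) - 1, by omega, ?_⟩
    simp only [zigR]; split_ifs <;> omega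

lemma zig_read_bound {n r k p' : ℕ} (hk : r ≤ k) (hp' : p' < 2 * k + 1) :
    zigR r (2 * n) p' ≤ r + k ∨ 2 * n + r - k ≤ zigR r (2 * n) p' := by
  simp only [zigR]; split_ifs <;> omega

lemma zig_odd {n r k : ℕ} (hk : r ≤ k) :
    zigR r (2 * n) (2 * k + 1) = 2 * n + r - (k + 1) := by
  simp only [zigR]; split_ifs <;> omega

lemma psiR_length (r : ℕ) (w : List Bool) : (psiR r w).length = w.length := by
  unfold psiR; rw [List.length_ofFn]

lemma psiR_getD (r : ℕ) (w : List Bool) (p : ℕ) (hp : p < w.length) :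
    (psiR r w).getD p false =
      if ∃ p' : ℕ, p' < p ∧ MatchPair w (zigR r w.length p') (zigR r w.length p)
      then false else true := by
  unfold psiR
  rw [List.getD_eq_getElem _ _ (by rw [List.length_ofFn]; exact hp)]
  rw [List.getElem_ofFn]

/-- tunnels of `D ∈ D_n` with midpoint in `x > n + r` (i.e. `|A| > |C| + 2r`)
correspond in number to even rises of `D' = Ψ_r(D)` at 1-indexed even positions `> 2r`. -/
theorem tunGt_eq_evenRisesAfter (r n : ℕ) (D : List Bool) (hD : IsDyck D)
    (hlen : D.length = 2 * n) :
    tunGt r D = evenRisesAfter r (psiR r D) := by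
  classical
  set f : ℕ → ℕ := fun i =>
    if h : ∃ j, Matched D i j then 4 * n + 2 * r - 1 - 2 * h.choose else 0 with hf
  have hfval : ∀ i j, Matched D i j → f i = 4 * n + 2 * r - 1 - 2 * j := by
    intro i j hij
    have hex : ∃ j, Matched D i j := ⟨j, hij⟩
    have hc : hex.choose = j := matched_unique_right hex.choose_spec hij
    simp only [hf, dif_pos hex, hc]
  set S : Set ℕ := {i : ℕ | ∃ A B C : List Bool,
    IsDyck B ∧ D = A ++ true :: (B ++ false :: C) ∧
    A.length = i ∧ C.length + 2 * r < A.length} with hS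
  set T : Set ℕ := {p : ℕ | p < (psiR r D).length ∧ p % 2 = 1 ∧ 2 * r ≤ p ∧
    (psiR r D).getD p false = true} with hT
  have hTlen : (psiR r D).length = 2 * n := by rw [psiR_length, hlen]
  have hbij : Set.BijOn f S T := by
    refine ⟨?_, ?_, ?_⟩
    · -- MapsTo
      intro i hi
      obtain ⟨A, B, C, hB, hw, hA, hC⟩ := hi
      have hm : Matched D i (i + B.length + 1) := ⟨A, B, C, hB, hw, hA, rfl⟩
      set j := i + B.length + 1 with hj
      have hDlen : D.length = i + B.length + C.length + 2 := by
        rw [hw]; simp; omega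
      set k := C.length + r with hk
      have hfv : f i = 2 * k + 1 := by rw [hfval i j hm]; omega
      rw [hT, Set.mem_setOf_eq, hfv, hTlen]
      refine ⟨by omega, by omega, by omega, ?_⟩
      rw [psiR_getD r D _ (by omega), if_neg]
      rintro ⟨p', hp'lt, hmp⟩
      rw [hlen] at hmp
      have hzp : zigR r (2 * n) (2 * k + 1) = j := by
        rw [zig_odd (by omega)]; omega
      rw [hzp] at hmp
      have hbd := zig_read_bound (n := n) (r := r) (k := k) (p' := p') (by omega) (by omega)
      rcases hmp with hmp | hmp
      · have hx : zigR r (2 * n) p' = i := matched_unique_left hmp hm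
        rw [hx] at hbd
        obtain ⟨hij', hjlen', _, _, _⟩ := matched_char hm
        omega
      · have h1 := (matched_char hmp).2.2.1
        have h2 := (matched_char hm).2.2.2.1
        rw [h1] at h2
        exact absurd h2 (by simp)
    · -- InjOn
      intro i hi i' hi' heq
      obtain ⟨A, B, C, hB, hw, hA, hC⟩ := hi
      obtain ⟨A', B', C', hB', hw', hA', hC'⟩ := hi'
      have hm : Matched D i (i + B.length + 1) := ⟨A, B, C, hB, hw, hA, rfl⟩
      have hm' : Matched D i' (i' + B'.length + 1) := ⟨A', B', C', hB', hw', hA', rfl⟩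
      have h1 := hfval _ _ hm
      have h2 := hfval _ _ hm'
      have hjl := (matched_char hm).2.1
      have hjl' := (matched_char hm').2.1
      rw [hlen] at hjl hjl'
      have hjj : i + B.length + 1 = i' + B'.length + 1 := by
        rw [h1, h2] at heq; omega
      exact matched_unique_left hm (hjj ▸ hm')
    · -- SurjOn
      intro p hp
      obtain ⟨hplen, hpodd, hpge, hptrue⟩ := hp
      rw [hTlen] at hplen
      set k := p / 2 with hk
      have hpk : p = 2 * k + 1 := by omega
      have hkr : r ≤ k := by omega
      set j := 2 * n + r - (k + 1) with hj
      have hkn : k + 1 ≤ n := by omega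
      have hjlt : j < D.length := by rw [hlen]; omega
      rw [psiR_getD r D p (by omega)] at hptrue
      have hno : ¬∃ p' : ℕ, p' < p ∧
          MatchPair D (zigR r D.length p') (zigR r D.length p) := by
        intro hcon
        rw [if_pos hcon] at hptrue
        exact absurd hptrue (by simp)
      rw [hlen] at hno
      have hzp : zigR r (2 * n) p = j := by
        rw [hpk, zig_odd hkr]
      rw [hzp] at hno
      have hgj : D.getD j false = false := by
        cases hgj : D.getD j false
        · rfl
        · exfalso
          obtain ⟨m, hm⟩ := exists_matched_of_true hD hjlt hgj
          obtain ⟨hjm, hmlen, _, _, _⟩ := matched_char hm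
          rw [hlen] at hmlen
          obtain ⟨p'', hp''lt, hp''eq⟩ :=
            read_before (n := n) (x := m) hkr (Or.inr ⟨by omega, by omega⟩)
          exact hno ⟨p'', by omega, by rw [hp''eq]; exact Or.inr hm⟩
      obtain ⟨i, hi⟩ := exists_matched_of_false hD hjlt hgj
      obtain ⟨hij, _, _, _, _⟩ := matched_char hi
      have hik : r + k < i := by
        by_contra hile
        obtain ⟨p'', hp''lt, hp''eq⟩ :=
          read_before (n := n) (x := i) hkr (Or.inl (by omega))
        exact hno ⟨p'', by omega, by rw [hp''eq]; exact Or.inl hi⟩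
      refine ⟨i, ?_, ?_⟩
      · obtain ⟨A, B, C, hB, hw, hA, hjq⟩ := hi
        have hDlen : D.length = i + B.length + C.length + 2 := by
          rw [hw]; simp; omega
        exact ⟨A, B, C, hB, hw, hA, by omega⟩
      · rw [hfval i j hi]; omega
  show S.ncard = T.ncard
  rw [← hbij.image_eq, Set.ncard_image_of_injOn hbij.injOn]

end DyckBij
end

section
/- Let J(x,t,s,u,v,q,z) = Σ x^{h(D)} t^{ih(D)} s^{fh(D)} u^{odr(D)} v^{er(D)} q^{μ(D)} z^{|D|}, summed over all nonempty Dyck words D, regarded as a formal power series, and set K = J(1,q,q,v,u,q,z) (note that u and v are interchanged). Then K satisfies uzK² − [1 − (u+v)z + uv(1−q)² z²]K + q²vz = 0, and (1 − xuz − uzK) · J(x,t,s,u,v,q,z) = uz[xts + (1 − xu(1−t)(1−s)z)K]. -/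
attribute [local instance] Classical.propDecidable

namespace DyckBij

/-- The polynomial variables: `x = X 0`, `t = X 1`, `s = X 2`, `u = X 3`, `v = X 4`,
`q = X 5`. -/
noncomputable def xP6 : MvPolynomial (Fin 6) ℚ := MvPolynomial.X 0
noncomputable def tP6 : MvPolynomial (Fin 6) ℚ := MvPolynomial.X 1
noncomputable def sP6 : MvPolynomial (Fin 6) ℚ := MvPolynomial.X 2
noncomputable def uP6 : MvPolynomial (Fin 6) ℚ := MvPolynomial.X 3
noncomputable def vP6 : MvPolynomial (Fin 6) ℚ := MvPolynomial.X 4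
noncomputable def qP6 : MvPolynomial (Fin 6) ℚ := MvPolynomial.X 5

/-- `J(a,b,c,d,e,g,z) = Σ a^{h(D)} b^{ih(D)} c^{fh(D)} d^{odr(D)} e^{er(D)} g^{μ(D)} z^{|D|}`,
summed over all nonempty Dyck words `D`. -/
noncomputable def Jser (a b c d e g : MvPolynomial (Fin 6) ℚ) :
    PowerSeries (MvPolynomial (Fin 6) ℚ) :=
  PowerSeries.mk fun n =>
    if n = 0 then 0
    else
      ∑ f : Fin (2 * n) → Bool,
        if IsDyck (List.ofFn f) then
          a ^ numHills (List.ofFn f) * b ^ initHill (List.ofFn f) *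
            c ^ finHill (List.ofFn f) * d ^ oddRises (List.ofFn f) *
            e ^ evenRises (List.ofFn f) * g ^ numUStarD (List.ofFn f)
        else 0

/-- `K = J(1,q,q,v,u,q,z)` (with `u` and `v` interchanged). -/
noncomputable def Kser : PowerSeries (MvPolynomial (Fin 6) ℚ) :=
  Jser 1 qP6 qP6 vP6 uP6 qP6


-- ===== auxiliary development =====

lemma ct_cons_true (l : List Bool) : (true :: l).count true = l.count true + 1 := by
  simp [List.count_cons]
lemma cf_cons_true (l : List Bool) : (true :: l).count false = l.count false := by
  simp [List.count_cons]
lemma ct_cons_false (l : List Bool) : (false :: l).count true = l.count true := by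
  simp [List.count_cons]
lemma cf_cons_false (l : List Bool) : (false :: l).count false = l.count false + 1 := by
  simp [List.count_cons]
lemma ct_singleton_false : ([false] : List Bool).count true = 0 := by simp
lemma cf_singleton_false : ([false] : List Bool).count false = 1 := by simp

lemma IsDyck.head_eq (h : IsDyck (x :: t)) : x = true := by
  have := h.2 [x] ⟨t, rfl⟩
  cases x
  · simp [List.count_cons] at this
  · rfl

/-- Structure of balanced prefixes of `true :: A ++ false :: B`. -/
lemma balanced_prefix_structure (hA : IsDyck A) (X : List Bool)
    (hX : X <+: true :: A ++ false :: B) (hbal : X.count false = X.count true) :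
    X = [] ∨ ∃ X', X' <+: B ∧ X = true :: A ++ false :: X' := by
  have hXt : X = (true :: A ++ false :: B).take X.length := List.prefix_iff_eq_take.mp hX
  rcases Nat.eq_zero_or_pos X.length with h0 | h1
  · left; exact List.eq_nil_of_length_eq_zero h0
  · right
    obtain ⟨m, hm⟩ : ∃ m, X.length = m + 1 := ⟨X.length - 1, by omega⟩
    rw [hm] at hXt
    simp only [List.cons_append, List.take_succ_cons] at hXt
    rw [List.take_append] at hXt
    rcases le_or_gt m A.length with hle | hlt
    · exfalso
      rw [show m - A.length = 0 by omega] at hXt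
      simp only [List.take_zero, List.append_nil] at hXt
      have hp := hA.2 _ (List.take_prefix m A)
      rw [hXt, cf_cons_true, ct_cons_true] at hbal
      omega
    · rw [List.take_of_length_le (show A.length ≤ m by omega)] at hXt
      obtain ⟨k, hk⟩ : ∃ k, m - A.length = k + 1 := ⟨m - A.length - 1, by omega⟩
      rw [hk, List.take_succ_cons] at hXt
      exact ⟨B.take k, List.take_prefix _ _, by simpa using hXt⟩

lemma isDyck_iff_take (w : List Bool) : IsDyck w ↔
    (w.count false = w.count true ∧ ∀ n, (w.take n).count false ≤ (w.take n).count true) := by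
  constructor
  · rintro ⟨h1, h2⟩
    exact ⟨h1, fun n => h2 _ (List.take_prefix n w)⟩
  · rintro ⟨h1, h2⟩
    refine ⟨h1, fun p hp => ?_⟩
    have := h2 p.length
    rwa [← List.prefix_iff_eq_take.mp hp] at this

/-- Existence of the first-return decomposition. -/
lemma exists_decomp (hD : IsDyck D) (hne : D ≠ []) :
    ∃ A B, IsDyck A ∧ IsDyck B ∧ D = true :: A ++ false :: B := by
  classical
  obtain ⟨x, D₀, rfl⟩ : ∃ x D₀, D = x :: D₀ := by
    cases D with
    | nil => exact absurd rfl hne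
    | cons x t => exact ⟨x, t, rfl⟩
  have hx : x = true := hD.head_eq
  subst hx
  have hcnt : D₀.count false = D₀.count true + 1 := by
    have := hD.1
    rw [cf_cons_true, ct_cons_true] at this
    omega
  have hPex : ∃ n, (D₀.take n).count false = (D₀.take n).count true + 1 :=
    ⟨D₀.length, by rw [List.take_length]; exact hcnt⟩
  obtain ⟨m, hmbal, hmin⟩ : ∃ m, ((D₀.take m).count false = (D₀.take m).count true + 1) ∧
      ∀ k, k < m → ¬ ((D₀.take k).count false = (D₀.take k).count true + 1) :=
    ⟨Nat.find hPex, Nat.find_spec hPex, fun k hk => Nat.find_min hPex hk⟩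
  have hmle : m ≤ D₀.length := by
    by_contra hc
    push_neg at hc
    exact hmin D₀.length hc (by rw [List.take_length]; exact hcnt)
  have hm1 : 1 ≤ m := by
    by_contra hc
    push_neg at hc
    interval_cases m
    simp at hmbal
  obtain ⟨k, rfl⟩ : ∃ k, m = k + 1 := ⟨m - 1, by omega⟩
  have hklt : k < D₀.length := by omega
  have hsplit : D₀.take (k+1) = D₀.take k ++ [D₀.getD k false] := by
    rw [List.take_succ, List.getElem?_eq_getElem hklt]
    simp [List.getD_eq_getElem, hklt]
  -- Dyck prefix inequalities for true :: D₀.take n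
  have hpre : ∀ n, (D₀.take n).count false ≤ (D₀.take n).count true + 1 := by
    intro n
    have := hD.2 _ (List.take_prefix (n+1) (true :: D₀))
    rw [List.take_succ_cons, cf_cons_true, ct_cons_true] at this
    omega
  have hlast : D₀.getD k false = false := by
    by_contra hc
    simp only [Bool.not_eq_false] at hc
    rw [hsplit, hc, List.count_append, List.count_append] at hmbal
    simp at hmbal
    have := hpre k
    have := hmin k (by omega)
    omega
  refine ⟨D₀.take k, D₀.drop (k+1), ?_, ?_, ?_⟩
  · rw [isDyck_iff_take]
    have hAcnt : (D₀.take k).count false = (D₀.take k).count true := by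
      rw [hsplit, hlast, List.count_append, List.count_append,
        ct_singleton_false, cf_singleton_false] at hmbal
      omega
    refine ⟨hAcnt, fun n => ?_⟩
    rw [List.take_take]
    have h1 := hpre (min n k)
    rcases eq_or_lt_of_le h1 with h2 | h2
    · exfalso
      exact hmin (min n k) (by omega) h2
    · omega
  · rw [isDyck_iff_take]
    have hBcnt : ∀ n, (D₀.drop (k+1)).take n = (D₀.take (k+1+n)).drop (k+1) := by
      intro n
      rw [List.take_drop]
    constructor
    · have h1 : D₀ = D₀.take (k+1) ++ D₀.drop (k+1) := (List.take_append_drop _ _).symm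
      have h2 := hcnt
      conv at h2 => rw [h1]
      rw [List.count_append, List.count_append] at h2
      omega
    · intro n
      have h3 : D₀.take (k+1+n) = D₀.take (k+1) ++ (D₀.drop (k+1)).take n := by
        rw [List.take_add]
      have h4 := hpre (k+1+n)
      rw [h3, List.count_append, List.count_append] at h4
      omega
  · conv_lhs => rw [← List.take_append_drop (k+1) D₀]
    rw [hsplit, hlast]
    simp

/-- Uniqueness of the first-return decomposition. -/
lemma decomp_unique (hA : IsDyck A) (hA' : IsDyck A')
    (h : true :: A ++ false :: B = true :: A' ++ false :: B') : A = A' ∧ B = B' := by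
  have key : ∀ (U V S T : List Bool), IsDyck U → IsDyck V →
      U ++ false :: S = V ++ false :: T → U.length ≤ V.length := by
    intro U V S T hU hV heq
    by_contra hc
    push_neg at hc
    have hL : (U ++ false :: S).take (V.length+1) = U.take (V.length+1) := by
      rw [List.take_append, show V.length + 1 - U.length = 0 by omega]
      simp
    have hR : (V ++ false :: T).take (V.length+1) = V ++ [false] := by
      rw [List.take_append, List.take_of_length_le (show V.length ≤ V.length + 1 by omega),
        show V.length + 1 - V.length = 1 by omega]
      simp
    have hp := hU.2 _ (List.take_prefix (V.length+1) U)
    rw [← hL, heq, hR, List.count_append, List.count_append,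
      ct_singleton_false, cf_singleton_false] at hp
    have := hV.1
    omega
  have h' : A ++ false :: B = A' ++ false :: B' := by simpa using h
  have hlen : A.length = A'.length :=
    le_antisymm (key A A' B B' hA hA' h') (key A' A B' B hA' hA h'.symm)
  obtain ⟨h1, h2⟩ := List.append_inj h' hlen
  exact ⟨h1, by simpa using h2⟩


lemma isDyck_nil : IsDyck [] := ⟨rfl, by rintro p ⟨t, ht⟩; simp [List.append_eq_nil_iff] at ht; simp [ht.1]⟩

lemma count_true_add_count_false (w : List Bool) : w.count true + w.count false = w.length := by
  induction w with
  | nil => simp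
  | cons x t ih => cases x <;> simp [List.count_cons] <;> omega

lemma IsDyck.length_eq (h : IsDyck w) : w.length = 2 * w.count true := by
  have := count_true_add_count_false w
  have h1 := h.1
  omega

lemma IsDyck.append (hl : IsDyck l) (hr : IsDyck r) : IsDyck (l ++ r) := by
  rw [isDyck_iff_take] at *
  constructor
  · simp [List.count_append, hl.1, hr.1]
  · intro n
    rw [List.take_append]
    simp only [List.count_append]
    have := hl.2 n
    have := hr.2 (n - l.length)
    omega


lemma IsDyck.getD_zero (h : IsDyck A) (hA : A ≠ []) : A.getD 0 false = true := by
  cases A with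
  | nil => simp at hA
  | cons x t => simpa using h.head_eq

lemma IsDyck.getLast_eq (h : IsDyck A) (hA : A ≠ []) : A.getLast hA = false := by
  by_contra hc
  have hlast : A.getLast hA = true := by
    simp only [Bool.not_eq_false] at hc
    exact hc
  have hdrop : A = A.dropLast ++ [A.getLast hA] := (A.dropLast_append_getLast hA).symm
  have hp : A.dropLast <+: A := ⟨[A.getLast hA], hdrop.symm⟩
  have h2 := h.2 _ hp
  have h1 := h.1
  rw [hdrop] at h1
  simp [List.count_append, hlast] at h1
  omega

lemma IsDyck.getD_last (h : IsDyck A) (hA : A ≠ []) : A.getD (A.length - 1) false = false := by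
  have := h.getLast_eq hA
  rw [List.getLast_eq_getElem] at this
  rw [List.getD_eq_getElem]
  exact this


lemma ncard_eq_sum (L : ℕ) (P : ℕ → Prop) [DecidablePred P] :
    {p : ℕ | p < L ∧ P p}.ncard = ∑ p ∈ Finset.range L, if P p then 1 else 0 := by
  classical
  rw [← Finset.card_filter]
  rw [← Set.ncard_coe_finset]
  congr 1
  ext p
  simp [Finset.mem_filter]

lemma sum_range_add {M : Type*} [AddCommMonoid M] (f : ℕ → M) (m n : ℕ) :
    ∑ i ∈ Finset.range (m + n), f i = ∑ i ∈ Finset.range m, f i + ∑ j ∈ Finset.range n, f (m + j) := by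
  induction n with
  | zero => simp
  | succ k ih => rw [← Nat.add_assoc, Finset.sum_range_succ, ih, Finset.sum_range_succ, add_assoc]

lemma oddRises_eq_sum (w : List Bool) :
    oddRises w = ∑ p ∈ Finset.range w.length, if p % 2 = 0 ∧ w.getD p false = true then 1 else 0 :=
  ncard_eq_sum _ _
lemma evenRises_eq_sum (w : List Bool) :
    evenRises w = ∑ p ∈ Finset.range w.length, if p % 2 = 1 ∧ w.getD p false = true then 1 else 0 :=
  ncard_eq_sum _ _
lemma numUStarD_eq_sum (w : List Bool) :
    numUStarD w = ∑ i ∈ Finset.range w.length,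
      if i + 3 ≤ w.length ∧ w.getD i false = true ∧ w.getD (i + 2) true = false then 1 else 0 := by
  rw [numUStarD, show {i : ℕ | i + 3 ≤ w.length ∧ w.getD i false = true ∧ w.getD (i + 2) true = false}
      = {i : ℕ | i < w.length ∧ (i + 3 ≤ w.length ∧ w.getD i false = true ∧ w.getD (i + 2) true = false)} by
    ext i; simp only [Set.mem_setOf_eq]; constructor
    · rintro ⟨h1, h2, h3⟩; exact ⟨by omega, h1, h2, h3⟩
    · rintro ⟨_, h⟩; exact h]
  exact ncard_eq_sum _ _

lemma oddRises_nil : oddRises [] = 0 := by simp [oddRises_eq_sum]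
lemma evenRises_nil : evenRises [] = 0 := by simp [evenRises_eq_sum]
lemma numUStarD_nil : numUStarD [] = 0 := by simp [numUStarD_eq_sum]

lemma oddRises_cons (x : Bool) (w : List Bool) :
    oddRises (x :: w) = (if x = true then 1 else 0) + evenRises w := by
  rw [oddRises_eq_sum, List.length_cons, Finset.sum_range_succ']
  have h1 : ∀ p ∈ Finset.range w.length,
      (if (p+1) % 2 = 0 ∧ (x :: w).getD (p+1) false = true then (1:ℕ) else 0)
      = (if p % 2 = 1 ∧ w.getD p false = true then 1 else 0) := by
    intro p _
    rw [List.getD_cons_succ]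
    exact if_congr (by constructor <;> { rintro ⟨h1, h2⟩; exact ⟨by omega, h2⟩ }) rfl rfl
  rw [Finset.sum_congr rfl h1, ← evenRises_eq_sum]
  have h0 : (if (0:ℕ) % 2 = 0 ∧ (x :: w).getD 0 false = true then (1:ℕ) else 0)
      = (if x = true then 1 else 0) := by
    simp [List.getD_cons_zero]
  rw [h0, add_comm]

lemma evenRises_cons (x : Bool) (w : List Bool) :
    evenRises (x :: w) = oddRises w := by
  rw [evenRises_eq_sum, List.length_cons, Finset.sum_range_succ']
  have h1 : ∀ p ∈ Finset.range w.length,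
      (if (p+1) % 2 = 1 ∧ (x :: w).getD (p+1) false = true then (1:ℕ) else 0)
      = (if p % 2 = 0 ∧ w.getD p false = true then 1 else 0) := by
    intro p _
    rw [List.getD_cons_succ]
    exact if_congr (by constructor <;> { rintro ⟨h1, h2⟩; exact ⟨by omega, h2⟩ }) rfl rfl
  rw [Finset.sum_congr rfl h1, ← oddRises_eq_sum]
  have h0 : (if (0:ℕ) % 2 = 1 ∧ (x :: w).getD 0 false = true then (1:ℕ) else 0) = 0 := by
    norm_num
  rw [h0, add_zero]

lemma rises_append (l w : List Bool) :
    (oddRises (l ++ w) = oddRises l + (if l.length % 2 = 0 then oddRises w else evenRises w)) ∧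
    (evenRises (l ++ w) = evenRises l + (if l.length % 2 = 0 then evenRises w else oddRises w)) := by
  induction l with
  | nil => simp [oddRises_nil, evenRises_nil]
  | cons x t ih =>
    obtain ⟨ih1, ih2⟩ := ih
    rw [List.cons_append]
    constructor
    · rw [oddRises_cons, oddRises_cons, ih2, List.length_cons]
      rcases Nat.mod_two_eq_zero_or_one t.length with h | h <;>
        simp [h, Nat.succ_mod_two_eq_zero_iff, Nat.succ_mod_two_eq_one_iff] <;> omega
    · rw [evenRises_cons, evenRises_cons, ih1, List.length_cons]
      rcases Nat.mod_two_eq_zero_or_one t.length with h | h <;>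
        simp [h, Nat.succ_mod_two_eq_zero_iff, Nat.succ_mod_two_eq_one_iff] <;> omega


lemma numUStarD_append (l w : List Bool) :
    numUStarD (l ++ w) = numUStarD l + numUStarD w
      + (if 2 ≤ l.length ∧ 1 ≤ w.length ∧ l.getD (l.length - 2) false = true
          ∧ w.getD 0 true = false then 1 else 0)
      + (if 1 ≤ l.length ∧ 2 ≤ w.length ∧ l.getD (l.length - 1) false = true
          ∧ w.getD 1 true = false then 1 else 0) := by
  rw [numUStarD_eq_sum (l ++ w), List.length_append, sum_range_add]
  have hw : ∀ j ∈ Finset.range w.length,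
      (if l.length + j + 3 ≤ l.length + w.length ∧ (l ++ w).getD (l.length + j) false = true
        ∧ (l ++ w).getD (l.length + j + 2) true = false then (1:ℕ) else 0)
      = (if j + 3 ≤ w.length ∧ w.getD j false = true ∧ w.getD (j + 2) true = false then 1 else 0) := by
    intro j _
    rw [List.getD_append_right l w false (l.length + j) (by omega),
      show l.length + j + 2 = l.length + (j + 2) by ring,
      List.getD_append_right l w true (l.length + (j+2)) (by omega)]
    simp only [Nat.add_sub_cancel_left]
    exact if_congr (by constructor <;> { rintro ⟨h1, h2, h3⟩; exact ⟨by omega, h2, h3⟩ }) rfl rfl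
  rw [Finset.sum_congr rfl hw, ← numUStarD_eq_sum]
  -- remaining: the sum over range l.length
  have key : ∑ i ∈ Finset.range l.length,
      (if i + 3 ≤ l.length + w.length ∧ (l ++ w).getD i false = true
        ∧ (l ++ w).getD (i + 2) true = false then (1:ℕ) else 0)
      = numUStarD l
      + (if 2 ≤ l.length ∧ 1 ≤ w.length ∧ l.getD (l.length - 2) false = true
          ∧ w.getD 0 true = false then 1 else 0)
      + (if 1 ≤ l.length ∧ 2 ≤ w.length ∧ l.getD (l.length - 1) false = true
          ∧ w.getD 1 true = false then 1 else 0) := by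
    rcases Nat.lt_or_ge l.length 2 with hl2 | hl2
    · rcases Nat.lt_or_ge l.length 1 with h0 | h1
      · -- l = []
        have hnil : l = [] := List.eq_nil_of_length_eq_zero (by omega)
        subst hnil
        simp [numUStarD_eq_sum]
      · -- l.length = 1
        have h : l.length = 1 := by omega
        have h1 : numUStarD l = 0 := by
          rw [numUStarD_eq_sum, h, Finset.sum_range_one, if_neg (by omega)]
        have hg0 : (l ++ w).getD 0 false = l.getD 0 false := List.getD_append l w false 0 (by omega)
        have hg2 : (l ++ w).getD 2 true = w.getD 1 true := by
          rw [List.getD_append_right l w true 2 (by omega), h]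
        rw [h, Finset.sum_range_one, hg0, hg2, h1]
        have e1 : (if 2 ≤ 1 ∧ 1 ≤ w.length ∧ l.getD (1-2) false = true ∧ w.getD 0 true = false
            then (1:ℕ) else 0) = 0 := if_neg (fun hc => absurd hc.1 (by omega))
        rw [e1]
        simp only [Nat.zero_add, zero_add]
        exact if_congr (Iff.intro
          (fun ⟨h1', h2', h3'⟩ => ⟨by omega, by omega, h2', h3'⟩)
          (fun ⟨h1', h2', h3', h4'⟩ => ⟨by omega, h3', h4'⟩)) rfl rfl
    · -- l.length ≥ 2
      obtain ⟨k, hk⟩ : ∃ k, l.length = k + 1 + 1 := ⟨l.length - 2, by omega⟩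
      rw [show Finset.range l.length = Finset.range (k+1+1) from by rw [hk],
        Finset.sum_range_succ, Finset.sum_range_succ]
      have hmain : ∀ i ∈ Finset.range k,
          (if i + 3 ≤ l.length + w.length ∧ (l ++ w).getD i false = true
            ∧ (l ++ w).getD (i + 2) true = false then (1:ℕ) else 0)
          = (if i + 3 ≤ l.length ∧ l.getD i false = true ∧ l.getD (i + 2) true = false then 1 else 0) := by
        intro i hi
        rw [Finset.mem_range] at hi
        rw [List.getD_append l w false i (by omega), List.getD_append l w true (i+2) (by omega)]
        exact if_congr (by constructor <;> { rintro ⟨h1, h2, h3⟩; exact ⟨by omega, h2, h3⟩ }) rfl rfl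
      rw [Finset.sum_congr rfl hmain]
      have hμ : numUStarD l = ∑ i ∈ Finset.range k,
          (if i + 3 ≤ l.length ∧ l.getD i false = true ∧ l.getD (i + 2) true = false then (1:ℕ) else 0) := by
        rw [numUStarD_eq_sum, hk, Finset.sum_range_succ, Finset.sum_range_succ,
          if_neg (by omega), if_neg (by omega)]
        simp
      rw [← hμ]
      -- now the two boundary terms
      have hb1 : (if k + 3 ≤ l.length + w.length ∧ (l ++ w).getD k false = true
            ∧ (l ++ w).getD (k + 2) true = false then (1:ℕ) else 0)
          = (if 2 ≤ l.length ∧ 1 ≤ w.length ∧ l.getD (l.length - 2) false = true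
            ∧ w.getD 0 true = false then 1 else 0) := by
        rw [List.getD_append l w false k (by omega),
          List.getD_append_right l w true (k+2) (by omega),
          show k + 2 - l.length = 0 by omega, show l.length - 2 = k by omega]
        exact if_congr (Iff.intro
          (fun ⟨h1, h2, h3⟩ => ⟨by omega, by omega, h2, h3⟩)
          (fun ⟨h1, h2, h3, h4⟩ => ⟨by omega, h3, h4⟩)) rfl rfl
      have hb2 : (if k + 1 + 3 ≤ l.length + w.length ∧ (l ++ w).getD (k+1) false = true
            ∧ (l ++ w).getD (k + 1 + 2) true = false then (1:ℕ) else 0)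
          = (if 1 ≤ l.length ∧ 2 ≤ w.length ∧ l.getD (l.length - 1) false = true
            ∧ w.getD 1 true = false then 1 else 0) := by
        rw [List.getD_append l w false (k+1) (by omega),
          List.getD_append_right l w true (k+1+2) (by omega),
          show k + 1 + 2 - l.length = 1 by omega, show l.length - 1 = k + 1 by omega]
        exact if_congr (Iff.intro
          (fun ⟨h1, h2, h3⟩ => ⟨by omega, by omega, h2, h3⟩)
          (fun ⟨h1, h2, h3, h4⟩ => ⟨by omega, h3, h4⟩)) rfl rfl
      rw [hb1, hb2]
  rw [key]
  ring

-- ===== hills section =====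

lemma isDyck_of_append_right (hA : IsDyck A) (hX : IsDyck (true :: A ++ false :: X')) :
    IsDyck X' := by
  constructor
  · have h1 := hX.1
    simp only [List.cons_append, cf_cons_true, ct_cons_true, List.count_append,
      cf_cons_false, ct_cons_false] at h1
    have := hA.1
    omega
  · intro p hp
    have hp2 : true :: A ++ false :: p <+: true :: A ++ false :: X' := by
      obtain ⟨t, rfl⟩ := hp
      exact ⟨t, by simp⟩
    have := hX.2 _ hp2
    simp only [List.cons_append, cf_cons_true, ct_cons_true, List.count_append,
      cf_cons_false, ct_cons_false] at this
    have := hA.1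
    omega

lemma isDyck_uAd (hA : IsDyck A) : IsDyck (true :: A ++ [false]) := by
  rw [isDyck_iff_take]
  constructor
  · simp only [List.cons_append, cf_cons_true, ct_cons_true, List.count_append,
      cf_singleton_false, ct_singleton_false]
    have := hA.1
    omega
  · intro n
    cases n with
    | zero => simp
    | succ m =>
      rw [List.cons_append, List.take_succ_cons, List.take_append]
      have h1 := ((isDyck_iff_take A).mp hA).2 m
      have h2 : (([false] : List Bool).take (m - A.length)).count true
          + (([false] : List Bool).take (m - A.length)).count false
          = (([false] : List Bool).take (m - A.length)).length :=
        count_true_add_count_false _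
      have h4 : (([false] : List Bool).take (m - A.length)).length ≤ 1 := by
        rw [List.length_take]
        simp only [List.length_cons, List.length_nil]
        omega
      rw [cf_cons_true, ct_cons_true, List.count_append, List.count_append]
      omega

lemma isDyck_uAdB (hA : IsDyck A) (hB : IsDyck B) : IsDyck (true :: A ++ false :: B) := by
  have : IsDyck ((true :: A ++ [false]) ++ B) := (isDyck_uAd hA).append hB
  simpa using this

/-- the set of hill positions -/
lemma hillSet_decomp (hA : IsDyck A) (hB : IsDyck B) :
    {i : ℕ | ∃ X Y : List Bool, IsDyck X ∧ IsDyck Y ∧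
        true :: A ++ false :: B = X ++ true :: false :: Y ∧ X.length = i}
      = (if A = [] then {0} else ∅) ∪
        (fun i => i + (A.length + 2)) '' {i : ℕ | ∃ X Y : List Bool, IsDyck X ∧ IsDyck Y ∧
          B = X ++ true :: false :: Y ∧ X.length = i} := by
  ext i
  simp only [Set.mem_setOf_eq, Set.mem_union, Set.mem_image]
  constructor
  · rintro ⟨X, Y, hX, hY, heq, rfl⟩
    have hpre : X <+: true :: A ++ false :: B := ⟨true :: false :: Y, heq.symm⟩
    rcases balanced_prefix_structure hA X hpre hX.1 with rfl | ⟨X', hX'pre, rfl⟩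
    · left
      have heq2 : A ++ false :: B = false :: Y := by simpa using heq
      have hAnil : A = [] := by
        cases A with
        | nil => rfl
        | cons a t =>
          exfalso
          have ha : a = true := hA.head_eq
          rw [ha] at heq2
          simp at heq2
      simp [hAnil]
    · right
      refine ⟨X'.length, ⟨X', Y, isDyck_of_append_right hA hX, hY, ?_, rfl⟩, by simp; omega⟩
      have : true :: A ++ false :: (X' ++ true :: false :: Y)
          = true :: A ++ false :: B := by
        rw [heq]
        simp
      simpa using this.symm
  · rintro (h0 | ⟨i', ⟨X', Y, hX', hY, rfl, rfl⟩, rfl⟩)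
    · rcases Classical.em (A = []) with rfl | hne
      · simp only [if_pos rfl, Set.mem_singleton_iff] at h0
        subst h0
        exact ⟨[], B, isDyck_nil, hB, by simp, rfl⟩
      · simp [if_neg hne] at h0
    · refine ⟨true :: A ++ false :: X', Y, isDyck_uAdB hA hX', hY, by simp, by simp; omega⟩

lemma hillSet_finite (B : List Bool) :
    {i : ℕ | ∃ X Y : List Bool, IsDyck X ∧ IsDyck Y ∧
        B = X ++ true :: false :: Y ∧ X.length = i}.Finite := by
  apply Set.Finite.subset (Set.finite_Iio (B.length + 1))
  rintro i ⟨X, Y, _, _, heq, rfl⟩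
  have : B.length = X.length + (2 + Y.length) := by rw [heq]; simp; omega
  simp only [Set.mem_Iio]
  omega

lemma numHills_decomp (hA : IsDyck A) (hB : IsDyck B) :
    numHills (true :: A ++ false :: B) = (if A = [] then 1 else 0) + numHills B := by
  have hinj : Function.Injective (fun i : ℕ => i + (A.length + 2)) :=
    fun a b h => by simpa using h
  have hfin1 := (hillSet_finite B).image (fun i : ℕ => i + (A.length + 2))
  have hdisj : Disjoint ({0} : Set ℕ) ((fun i : ℕ => i + (A.length + 2)) ''
      {i : ℕ | ∃ X Y : List Bool, IsDyck X ∧ IsDyck Y ∧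
        B = X ++ true :: false :: Y ∧ X.length = i}) := by
    rw [Set.disjoint_left]
    rintro a ha ⟨b, _, hb⟩
    simp only [Set.mem_singleton_iff] at ha
    have hb' : b + (A.length + 2) = a := hb
    omega
  have hmain : numHills (true :: A ++ false :: B)
      = (if A = [] then ({0} : Set ℕ) else ∅).ncard + numHills B := by
    rw [numHills, hillSet_decomp hA hB]
    rcases Classical.em (A = []) with h | h
    · rw [if_pos h, Set.ncard_union_eq hdisj (Set.finite_singleton 0) hfin1,
        Set.ncard_image_of_injective _ hinj]
      rfl
    · rw [if_neg h, Set.empty_union, Set.ncard_image_of_injective _ hinj,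
        Set.ncard_empty, numHills, Nat.zero_add]
  rw [hmain]
  rcases Classical.em (A = []) with h | h
  · rw [if_pos h, if_pos h, Set.ncard_singleton]
  · rw [if_neg h, if_neg h, Set.ncard_empty]

lemma initHill_decomp (hA : IsDyck A) :
    initHill (true :: A ++ false :: B) = if A = [] then 1 else 0 := by
  rcases Classical.em (A = []) with rfl | hne
  · simp [initHill]
  · have hx : (true :: A ++ false :: B).take 2 ≠ [true, false] := by
      cases A with
      | nil => exact absurd rfl hne
      | cons a t =>
        have ha : a = true := hA.head_eq
        subst ha
        simp
    rw [initHill, if_neg hx, if_neg hne]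

lemma finHill_eq_zero_iff_aux : finHill ([] : List Bool) = 0 := by
  rw [finHill, if_neg]
  rintro ⟨X, _, hX⟩
  simpa using congrArg List.length hX

lemma finHill_decomp (hA : IsDyck A) (hB : IsDyck B) :
    finHill (true :: A ++ false :: B)
      = if B = [] then (if A = [] then 1 else 0) else finHill B := by
  rcases Classical.em (B = []) with rfl | hBne
  · rw [if_pos rfl]
    rcases Classical.em (A = []) with rfl | hne
    · rw [if_pos rfl, finHill, if_pos ⟨[], isDyck_nil, rfl⟩]
    · rw [if_neg hne, finHill, if_neg]
      rintro ⟨X, hX, heq⟩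
      have hpre : X <+: true :: A ++ false :: ([] : List Bool) := ⟨[true, false], heq.symm⟩
      rcases balanced_prefix_structure hA X hpre hX.1 with rfl | ⟨X', hX'pre, rfl⟩
      · -- D = [u,d] forces A = []
        have hcontr := congrArg List.length heq
        simp only [List.length_cons, List.length_append, List.length_nil] at hcontr
        exact hne (List.eq_nil_of_length_eq_zero (by omega))
      · have hX'nil : X' = [] := List.prefix_nil.mp hX'pre
        subst hX'nil
        have hcontr := congrArg List.length heq
        simp only [List.length_cons, List.length_append, List.length_nil] at hcontr
        omega
  · rw [if_neg hBne, finHill, finHill]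
    congr 1
    simp only [eq_iff_iff]
    constructor
    · rintro ⟨X, hX, heq⟩
      have hpre : X <+: true :: A ++ false :: B := ⟨[true, false], heq.symm⟩
      rcases balanced_prefix_structure hA X hpre hX.1 with rfl | ⟨X', hX'pre, rfl⟩
      · exfalso
        have hcontr := congrArg List.length heq
        simp only [List.length_cons, List.length_append, List.length_nil] at hcontr
        have hBlen : B.length = 0 := by omega
        exact hBne (List.eq_nil_of_length_eq_zero hBlen)
      · have heq2 : X' ++ [true, false] = B := by
          have h5 : true :: A ++ false :: (X' ++ [true, false]) = true :: A ++ false :: B := by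
            rw [heq]
            simp
          simpa using h5
        exact ⟨X', isDyck_of_append_right hA hX, heq2.symm⟩
    · rintro ⟨X, hX, rfl⟩
      exact ⟨true :: A ++ false :: X, isDyck_uAdB hA hX, by simp⟩

lemma numHills_nil : numHills ([] : List Bool) = 0 := by
  rw [numHills]
  convert Set.ncard_empty ℕ
  ext i
  simp only [Set.mem_setOf_eq, Set.mem_empty_iff_false, iff_false]
  rintro ⟨X, Y, _, _, heq, _⟩
  have hc := congrArg List.length heq
  simp only [List.length_nil, List.length_append, List.length_cons] at hc
  omega

lemma initHill_nil : initHill ([] : List Bool) = 0 := by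
  simp [initHill]

lemma initHill_eq_ind (hA : IsDyck A) :
    initHill A = if 2 ≤ A.length ∧ A.getD 1 true = false then 1 else 0 := by
  rw [initHill]
  cases A with
  | nil => simp
  | cons a t =>
    have ha : a = true := hA.head_eq
    subst ha
    cases t with
    | nil =>
      rw [if_neg (by simp), if_neg (by simp)]
    | cons b t' =>
      cases b <;> simp

lemma finHill_eq_ind (hA : IsDyck A) :
    finHill A = if 2 ≤ A.length ∧ A.getD (A.length - 2) false = true then 1 else 0 := by
  rw [finHill]
  rcases Classical.em (2 ≤ A.length ∧ A.getD (A.length - 2) false = true) with h | h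
  · rw [if_pos h, if_pos]
    obtain ⟨hlen, hval⟩ := h
    have hne : A ≠ [] := by intro hc; rw [hc] at hlen; simp at hlen
    have hlast := hA.getD_last hne
    have hgd : ∀ j (hj : j < A.length), A[j] = A.getD j false := by
      intro j hj; rw [List.getD_eq_getElem _ _ hj]
    have hdrop : A.drop (A.length - 2) = [true, false] := by
      apply List.ext_getElem
      · simp; omega
      · intro i h1 h2
        simp only [List.length_cons, List.length_nil] at h2
        interval_cases i
        · rw [List.getElem_drop]
          have hlt : A.length - 2 + 0 < A.length := by omega
          rw [hgd _ hlt]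
          simpa using hval
        · rw [List.getElem_drop]
          have h3 : A.length - 2 + 1 = A.length - 1 := by omega
          have hlt : A.length - 2 + 1 < A.length := by omega
          rw [hgd _ hlt, h3]
          simpa using hlast
    have hAeq : A = A.take (A.length - 2) ++ [true, false] := by
      conv_lhs => rw [← List.take_append_drop (A.length - 2) A]
      rw [hdrop]
    refine ⟨A.take (A.length - 2), ⟨?_, ?_⟩, hAeq⟩
    · have h1 := hA.1
      conv at h1 => rw [hAeq]
      simp only [List.count_append] at h1
      simp at h1
      omega
    · intro p hp
      exact hA.2 p (hp.trans (List.take_prefix _ _))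
  · rw [if_neg h, if_neg]
    rintro ⟨X, hX, rfl⟩
    apply h
    have hlen : (X ++ [true, false]).length - 2 = X.length := by simp
    refine ⟨by simp, ?_⟩
    rw [hlen, List.getD_append_right X [true, false] false X.length le_rfl]
    simp


-- ===== statistic decomposition =====

lemma IsDyck.length_mod_two (hA : IsDyck A) : A.length % 2 = 0 := by
  have := hA.length_eq
  omega

lemma oddRises_decomp (hA : IsDyck A) (B : List Bool) :
    oddRises (true :: A ++ false :: B) = 1 + evenRises A + oddRises B := by
  rw [List.cons_append, oddRises_cons, (rises_append A (false :: B)).2,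
    if_pos hA.length_mod_two, evenRises_cons]
  simp
  omega

lemma evenRises_decomp (hA : IsDyck A) (B : List Bool) :
    evenRises (true :: A ++ false :: B) = oddRises A + evenRises B := by
  rw [List.cons_append, evenRises_cons, (rises_append A (false :: B)).1,
    if_pos hA.length_mod_two, oddRises_cons]
  simp

lemma numUStarD_single (x : Bool) : numUStarD [x] = 0 := by
  rw [numUStarD_eq_sum]
  simp

lemma getD_uAd (hA : IsDyck A) (hne : A ≠ []) :
    (true :: A ++ [false]).getD A.length false = false := by
  cases A with
  | nil => exact absurd rfl hne
  | cons a t =>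
    have h1 : (true :: (a :: t) ++ [false]).getD (t.length + 1) false
        = ((a :: t) ++ [false]).getD t.length false := by
      rw [List.cons_append, List.getD_cons_succ]
    have h2 : ((a :: t) ++ [false]).getD t.length false = (a :: t).getD t.length false :=
      List.getD_append _ _ _ _ (by simp)
    have h3 := hA.getD_last hne
    simp only [List.length_cons] at *
    rw [h1, h2]
    simpa using h3

lemma numUStarD_decomp (hA : IsDyck A) (hB : IsDyck B) :
    numUStarD (true :: A ++ false :: B)
      = initHill A + numUStarD A + finHill A + numUStarD B := by
  have hAlen : A.length ≠ 1 := by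
    have := hA.length_eq
    omega
  have h1 : true :: A ++ false :: B = (true :: A ++ [false]) ++ B := by simp
  rw [h1, numUStarD_append]
  have hc1 : (if 2 ≤ (true :: A ++ [false]).length ∧ 1 ≤ B.length ∧
      (true :: A ++ [false]).getD ((true :: A ++ [false]).length - 2) false = true
      ∧ B.getD 0 true = false then 1 else 0) = 0 := by
    rw [if_neg]
    rintro ⟨-, hBlen, hval, hB0⟩
    have hBne : B ≠ [] := by intro hc; rw [hc] at hBlen; simp at hBlen
    have hB0' : B.getD 0 false = true := hB.getD_zero hBne
    cases B with
    | nil => simp at hBlen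
    | cons b t =>
      simp only [List.getD_cons_zero] at hB0 hB0'
      rw [hB0'] at hB0
      simp at hB0
  have hc2 : (if 1 ≤ (true :: A ++ [false]).length ∧ 2 ≤ B.length ∧
      (true :: A ++ [false]).getD ((true :: A ++ [false]).length - 1) false = true
      ∧ B.getD 1 true = false then 1 else 0) = 0 := by
    rw [if_neg]
    rintro ⟨-, -, hval, -⟩
    have hlen : (true :: A ++ [false]).length - 1 = A.length + 1 := by simp
    rw [hlen] at hval
    have hlast : (true :: A ++ [false]).getD (A.length + 1) false = false := by
      rw [List.cons_append, List.getD_cons_succ]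
      rw [List.getD_append_right A [false] false A.length le_rfl]
      simp
    rw [hlast] at hval
    simp at hval
  rw [hc1, hc2]
  -- now μ(uAd)
  have h2 : true :: A ++ [false] = [true] ++ (A ++ [false]) := by simp
  have hmuAd : numUStarD (true :: A ++ [false]) = initHill A + numUStarD A + finHill A := by
    rw [h2, numUStarD_append]
    have hd1 : (if 2 ≤ ([true] : List Bool).length ∧ 1 ≤ (A ++ [false]).length ∧
        ([true] : List Bool).getD (([true] : List Bool).length - 2) false = true
        ∧ (A ++ [false]).getD 0 true = false then 1 else 0) = 0 := by
      rw [if_neg]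
      rintro ⟨hc, -⟩
      simp at hc
    have hd2 : (if 1 ≤ ([true] : List Bool).length ∧ 2 ≤ (A ++ [false]).length ∧
        ([true] : List Bool).getD (([true] : List Bool).length - 1) false = true
        ∧ (A ++ [false]).getD 1 true = false then 1 else 0) = initHill A := by
      rcases Classical.em (A = []) with rfl | hne
      · rw [if_neg (by rintro ⟨-, hc, -⟩; simp at hc), initHill_nil]
      · have hA2 : 2 ≤ A.length := by
          have : A.length ≠ 0 := fun hc => hne (List.eq_nil_of_length_eq_zero hc)
          omega
        rw [initHill_eq_ind hA]
        have hg : (A ++ [false]).getD 1 true = A.getD 1 true :=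
          List.getD_append _ _ _ _ (by omega)
        rw [hg]
        exact if_congr (Iff.intro
          (fun ⟨_, _, _, h4⟩ => ⟨hA2, h4⟩)
          (fun ⟨_, h4⟩ => ⟨by simp, by simp; omega, by simp, h4⟩)) rfl rfl
    -- μ(A ++ [false])
    have hmAf : numUStarD (A ++ [false]) = numUStarD A + finHill A := by
      rw [numUStarD_append]
      have he1 : (if 2 ≤ A.length ∧ 1 ≤ ([false] : List Bool).length ∧
          A.getD (A.length - 2) false = true
          ∧ ([false] : List Bool).getD 0 true = false then 1 else 0) = finHill A := by
        rw [finHill_eq_ind hA]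
        exact if_congr (Iff.intro
          (fun ⟨h1', _, h3', _⟩ => ⟨h1', h3'⟩)
          (fun ⟨h1', h2'⟩ => ⟨h1', by simp, h2', by simp⟩)) rfl rfl
      have he2 : (if 1 ≤ A.length ∧ 2 ≤ ([false] : List Bool).length ∧
          A.getD (A.length - 1) false = true
          ∧ ([false] : List Bool).getD 1 true = false then 1 else 0) = 0 := by
        rw [if_neg]
        rintro ⟨-, hc, -⟩
        simp at hc
      rw [he1, he2, numUStarD_single]
      omega
    rw [hd1, hd2, hmAf, numUStarD_single]
    omega
  rw [hmuAd]
  omega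


-- ===== weighted sums over Dyck words =====

noncomputable def wgt {R : Type*} [CommRing R] (a b c d e g : R) (w : List Bool) : R :=
  a ^ numHills w * b ^ initHill w * c ^ finHill w * d ^ oddRises w *
    e ^ evenRises w * g ^ numUStarD w

noncomputable def dyckFinset (n : ℕ) : Finset (List Bool) :=
  ((Finset.univ : Finset (Fin (2*n) → Bool)).image List.ofFn).filter IsDyck

lemma mem_dyckFinset {n : ℕ} {w : List Bool} :
    w ∈ dyckFinset n ↔ IsDyck w ∧ w.length = 2*n := by
  rw [dyckFinset, Finset.mem_filter, Finset.mem_image]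
  constructor
  · rintro ⟨⟨f, -, rfl⟩, h⟩
    exact ⟨h, by simp⟩
  · rintro ⟨h, hl⟩
    refine ⟨⟨fun i => w[(i : ℕ)]'(by omega), Finset.mem_univ _, ?_⟩, h⟩
    apply List.ext_getElem
    · simp [hl]
    · intro i h1 h2
      simp

lemma dyckFinset_zero : dyckFinset 0 = {[]} := by
  ext w
  rw [mem_dyckFinset, Finset.mem_singleton]
  constructor
  · rintro ⟨-, hl⟩
    exact List.eq_nil_of_length_eq_zero (by omega)
  · rintro rfl
    exact ⟨isDyck_nil, by simp⟩

lemma nil_notMem_dyckFinset {j : ℕ} (hj : j ≠ 0) : w ∈ dyckFinset j → w ≠ [] := by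
  rw [mem_dyckFinset]
  rintro ⟨-, hl⟩ rfl
  simp at hl
  omega

lemma wgt_nil {R : Type*} [CommRing R] (a b c d e g : R) : wgt a b c d e g [] = 1 := by
  rw [wgt, numHills_nil, initHill_nil, finHill_eq_zero_iff_aux, oddRises_nil,
    evenRises_nil, numUStarD_nil]
  simp

lemma wgt_decomp {R : Type*} [CommRing R] (a b c d e g : R) (hA : IsDyck A) (hB : IsDyck B) :
    wgt a b c d e g (true :: A ++ false :: B)
      = d * ((if A = [] then a * b else wgt 1 g g e d g A)
          * (wgt a 1 c d e g B * (if A = [] ∧ B = [] then c else 1))) := by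
  rw [wgt, numHills_decomp hA hB, initHill_decomp hA, finHill_decomp hA hB,
    oddRises_decomp hA B, evenRises_decomp hA B, numUStarD_decomp hA hB]
  rcases Classical.em (A = []) with rfl | hAne
  · rcases Classical.em (B = []) with rfl | hBne
    · simp [wgt, numHills_nil, initHill_nil, finHill_eq_zero_iff_aux, oddRises_nil,
        evenRises_nil, numUStarD_nil]
      ring
    · simp [wgt, numHills_nil, initHill_nil, finHill_eq_zero_iff_aux, oddRises_nil,
        evenRises_nil, numUStarD_nil, hBne]
      ring
  · rcases Classical.em (B = []) with rfl | hBne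
    · simp [wgt, numHills_nil, initHill_nil, finHill_eq_zero_iff_aux, oddRises_nil,
        evenRises_nil, numUStarD_nil, hAne]
      ring
    · simp [wgt, hAne, hBne]
      ring

noncomputable def Wsum {R : Type*} [CommRing R] (a b c d e g : R) (n : ℕ) : R :=
  ∑ w ∈ dyckFinset n, wgt a b c d e g w

lemma Wsum_zero {R : Type*} [CommRing R] (a b c d e g : R) : Wsum a b c d e g 0 = 1 := by
  rw [Wsum, dyckFinset_zero, Finset.sum_singleton, wgt_nil]

lemma Wsum_succ {R : Type*} [CommRing R] (a b c d e g : R) (n : ℕ) :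
    Wsum a b c d e g (n+1) = ∑ p ∈ Finset.HasAntidiagonal.antidiagonal n, ∑ A ∈ dyckFinset p.1,
      ∑ B ∈ dyckFinset p.2, wgt a b c d e g (true :: A ++ false :: B) := by
  have hstep : ∀ p ∈ Finset.HasAntidiagonal.antidiagonal n, (∑ A ∈ dyckFinset p.1,
      ∑ B ∈ dyckFinset p.2, wgt a b c d e g (true :: A ++ false :: B))
      = ∑ q ∈ dyckFinset p.1 ×ˢ dyckFinset p.2,
          wgt a b c d e g (true :: q.1 ++ false :: q.2) := by
    intro p _
    rw [Finset.sum_product]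
  rw [Finset.sum_congr rfl hstep,
    ← Finset.sum_sigma (Finset.HasAntidiagonal.antidiagonal n) (fun p => dyckFinset p.1 ×ˢ dyckFinset p.2)
      (fun q => wgt a b c d e g (true :: q.2.1 ++ false :: q.2.2))]
  refine (Finset.sum_bij (fun q _ => true :: q.2.1 ++ false :: q.2.2) ?_ ?_ ?_ ?_).symm
  · rintro ⟨p, A, B⟩ hq
    simp only [Finset.mem_sigma, Finset.HasAntidiagonal.mem_antidiagonal, Finset.mem_product] at hq
    obtain ⟨hp, hA, hB⟩ := hq
    rw [mem_dyckFinset] at hA hB ⊢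
    refine ⟨isDyck_uAdB hA.1 hB.1, ?_⟩
    simp only [List.length_cons, List.length_append]
    omega
  · rintro ⟨p, A, B⟩ hq ⟨p', A', B'⟩ hq' heq
    simp only [Finset.mem_sigma, Finset.HasAntidiagonal.mem_antidiagonal, Finset.mem_product] at hq hq'
    obtain ⟨hp, hA, hB⟩ := hq
    obtain ⟨hp', hA', hB'⟩ := hq'
    rw [mem_dyckFinset] at hA hB hA' hB'
    simp only at heq
    obtain ⟨hAA, hBB⟩ := decomp_unique hA.1 hA'.1 heq
    subst hAA
    subst hBB
    have hp1 : p.1 = p'.1 := by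
      have := hA.2
      have := hA'.2
      omega
    have hp2 : p = p' := by
      apply Prod.ext hp1
      omega
    subst hp2
    rfl
  · intro D hD
    rw [mem_dyckFinset] at hD
    obtain ⟨hDd, hDl⟩ := hD
    obtain ⟨A, B, hA, hB, rfl⟩ := exists_decomp hDd (by
      intro hc
      rw [hc] at hDl
      simp at hDl)
    have hAeven := hA.length_eq
    have hBeven := hB.length_eq
    have hlen : (true :: A ++ false :: B).length = A.length + B.length + 2 := by
      simp only [List.length_cons, List.length_append]
      omega
    refine ⟨⟨(A.count true, B.count true), A, B⟩, ?_, rfl⟩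
    simp only [Finset.mem_sigma, Finset.HasAntidiagonal.mem_antidiagonal, Finset.mem_product]
    refine ⟨by omega, ?_, ?_⟩ <;> rw [mem_dyckFinset]
    · exact ⟨hA, by omega⟩
    · exact ⟨hB, by omega⟩
  · intro q hq
    rfl

lemma inner_sum {R : Type*} [CommRing R] (a b c d e g : R) (i j : ℕ) :
    (∑ A ∈ dyckFinset i, ∑ B ∈ dyckFinset j, wgt a b c d e g (true :: A ++ false :: B))
      = d * ((if i = 0 then a*b else Wsum 1 g g e d g i) * Wsum a 1 c d e g j
          + if i = 0 ∧ j = 0 then a*b*(c-1) else 0) := by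
  have hrw : ∀ A ∈ dyckFinset i, ∀ B ∈ dyckFinset j,
      wgt a b c d e g (true :: A ++ false :: B)
      = d * ((if A = [] then a * b else wgt 1 g g e d g A)
          * (wgt a 1 c d e g B * (if A = [] ∧ B = [] then c else 1))) := by
    intro A hA B hB
    exact wgt_decomp a b c d e g (mem_dyckFinset.mp hA).1 (mem_dyckFinset.mp hB).1
  rcases Classical.em (i = 0) with rfl | hine
  · rw [dyckFinset_zero, Finset.sum_singleton]
    rcases Classical.em (j = 0) with rfl | hjne
    · rw [dyckFinset_zero, Finset.sum_singleton,
        hrw [] (by rw [dyckFinset_zero]; exact Finset.mem_singleton_self _)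
          [] (by rw [dyckFinset_zero]; exact Finset.mem_singleton_self _),
        if_pos rfl, if_pos ⟨rfl, rfl⟩, Wsum_zero, wgt_nil]
      simp [Wsum_zero]
      ring
    · have hBne : ∀ B ∈ dyckFinset j, wgt a b c d e g (true :: [] ++ false :: B)
          = d * (a * b * wgt a 1 c d e g B) := by
        intro B hB
        rw [hrw [] (by rw [dyckFinset_zero]; exact Finset.mem_singleton_self _) B hB,
          if_pos rfl, if_neg (fun h => nil_notMem_dyckFinset hjne hB h.2)]
        ring
      rw [Finset.sum_congr rfl hBne, if_pos rfl, if_neg (fun h => hjne h.2), ← Finset.mul_sum]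
      rw [Wsum]
      rw [← Finset.mul_sum]
      ring
  · have hAB : ∀ A ∈ dyckFinset i, ∀ B ∈ dyckFinset j,
        wgt a b c d e g (true :: A ++ false :: B)
        = d * (wgt 1 g g e d g A * wgt a 1 c d e g B) := by
      intro A hA B hB
      rw [hrw A hA B hB, if_neg (nil_notMem_dyckFinset hine hA),
        if_neg (fun h => nil_notMem_dyckFinset hine hA h.1)]
      ring
    calc (∑ A ∈ dyckFinset i, ∑ B ∈ dyckFinset j, wgt a b c d e g (true :: A ++ false :: B))
        = ∑ A ∈ dyckFinset i, ∑ B ∈ dyckFinset j,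
            d * (wgt 1 g g e d g A * wgt a 1 c d e g B) := by
          refine Finset.sum_congr rfl fun A hA => Finset.sum_congr rfl fun B hB => hAB A hA B hB
      _ = d * (Wsum 1 g g e d g i * Wsum a 1 c d e g j) := by
          rw [Wsum, Wsum, Finset.sum_mul_sum]
          rw [Finset.mul_sum]
          refine Finset.sum_congr rfl fun A hA => ?_
          rw [Finset.mul_sum]
      _ = d * ((if i = 0 then a*b else Wsum 1 g g e d g i) * Wsum a 1 c d e g j
          + if i = 0 ∧ j = 0 then a*b*(c-1) else 0) := by
          rw [if_neg hine, if_neg (fun h => hine h.1)]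
          ring

lemma Wsum_main {R : Type*} [CommRing R] (a b c d e g : R) (n : ℕ) :
    Wsum a b c d e g (n+1)
      = d * ((∑ p ∈ Finset.HasAntidiagonal.antidiagonal n,
          (if p.1 = 0 then a*b else Wsum 1 g g e d g p.1) * Wsum a 1 c d e g p.2)
        + if n = 0 then a*b*(c-1) else 0) := by
  rw [Wsum_succ]
  have h1 : ∀ p ∈ Finset.HasAntidiagonal.antidiagonal n, (∑ A ∈ dyckFinset p.1,
      ∑ B ∈ dyckFinset p.2, wgt a b c d e g (true :: A ++ false :: B))
      = d * ((if p.1 = 0 then a*b else Wsum 1 g g e d g p.1) * Wsum a 1 c d e g p.2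
          + if p.1 = 0 ∧ p.2 = 0 then a*b*(c-1) else 0) :=
    fun p _ => inner_sum a b c d e g p.1 p.2
  rw [Finset.sum_congr rfl h1]
  have h2 : ∑ p ∈ Finset.HasAntidiagonal.antidiagonal n,
      (if p.1 = 0 ∧ p.2 = 0 then a*b*(c-1) else (0:R)) = if n = 0 then a*b*(c-1) else 0 := by
    rcases Classical.em (n = 0) with rfl | hn
    · rw [if_pos rfl]
      rw [show Finset.HasAntidiagonal.antidiagonal 0 = {((0:ℕ), (0:ℕ))} from rfl]
      rw [Finset.sum_singleton]
      rw [if_pos ⟨rfl, rfl⟩]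
    · rw [if_neg hn]
      apply Finset.sum_eq_zero
      intro p hp
      rw [Finset.HasAntidiagonal.mem_antidiagonal] at hp
      rw [if_neg]
      rintro ⟨hp1, hp2⟩
      exact hn (by omega)
  rw [← Finset.mul_sum, Finset.sum_add_distrib, h2]


-- ===== power series layer =====

abbrev R6 : Type := MvPolynomial (Fin 6) ℚ

lemma coeff_Jser (a b c d e g : MvPolynomial (Fin 6) ℚ) (n : ℕ) :
    PowerSeries.coeff (R := MvPolynomial (Fin 6) ℚ) n (Jser a b c d e g)
      = if n = 0 then 0 else Wsum a b c d e g n := by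
  rw [Jser, PowerSeries.coeff_mk]
  rcases Classical.em (n = 0) with rfl | hn
  · rw [if_pos rfl, if_pos rfl]
  · rw [if_neg hn, if_neg hn, Wsum, dyckFinset, Finset.sum_filter,
      Finset.sum_image (fun x _ y _ h => List.ofFn_injective h)]
    refine Finset.sum_congr rfl fun f _ => ?_
    rw [wgt]

lemma master (a b c d e g : MvPolynomial (Fin 6) ℚ) :
    Jser a b c d e g = PowerSeries.C (R := MvPolynomial (Fin 6) ℚ) d * PowerSeries.X *
      (PowerSeries.C (R := MvPolynomial (Fin 6) ℚ) (a*b)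
          * (PowerSeries.C (R := MvPolynomial (Fin 6) ℚ) c + Jser a 1 c d e g)
        + Jser 1 g g e d g * (1 + Jser a 1 c d e g)) := by
  have hassoc : PowerSeries.C (R := MvPolynomial (Fin 6) ℚ) d * PowerSeries.X *
      (PowerSeries.C (R := MvPolynomial (Fin 6) ℚ) (a*b)
          * (PowerSeries.C (R := MvPolynomial (Fin 6) ℚ) c + Jser a 1 c d e g)
        + Jser 1 g g e d g * (1 + Jser a 1 c d e g))
      = PowerSeries.C (R := MvPolynomial (Fin 6) ℚ) d * (PowerSeries.X *
      (PowerSeries.C (R := MvPolynomial (Fin 6) ℚ) (a*b)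
          * (PowerSeries.C (R := MvPolynomial (Fin 6) ℚ) c + Jser a 1 c d e g)
        + Jser 1 g g e d g * (1 + Jser a 1 c d e g))) := by ring
  rw [hassoc]
  refine PowerSeries.ext fun n => ?_
  rcases n with _ | n
  · rw [coeff_Jser, if_pos rfl]
    rw [PowerSeries.coeff_C_mul, PowerSeries.coeff_zero_eq_constantCoeff, map_mul]
    simp
  · rw [coeff_Jser, if_neg (Nat.succ_ne_zero n), PowerSeries.coeff_C_mul,
      PowerSeries.coeff_succ_X_mul, Wsum_main]
    congr 1
    rw [map_add, PowerSeries.coeff_C_mul, map_add, PowerSeries.coeff_C,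
      PowerSeries.coeff_mul, coeff_Jser]
    have hG1 : ∀ j : ℕ, PowerSeries.coeff (R := MvPolynomial (Fin 6) ℚ) j (1 + Jser a 1 c d e g)
        = Wsum a 1 c d e g j := by
      intro j
      rw [map_add, coeff_Jser, PowerSeries.coeff_one]
      rcases Classical.em (j = 0) with rfl | hj
      · rw [if_pos rfl, if_pos rfl, Wsum_zero, add_zero]
      · rw [if_neg hj, if_neg hj, zero_add]
    have hK : ∀ p ∈ Finset.HasAntidiagonal.antidiagonal n,
        PowerSeries.coeff (R := MvPolynomial (Fin 6) ℚ) p.1 (Jser 1 g g e d g)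
          * PowerSeries.coeff (R := MvPolynomial (Fin 6) ℚ) p.2 (1 + Jser a 1 c d e g)
        = (if p.1 = 0 then 0 else Wsum 1 g g e d g p.1) * Wsum a 1 c d e g p.2 := by
      intro p _
      rw [coeff_Jser, hG1]
    rw [Finset.sum_congr rfl hK]
    -- split the antidiagonal sum on the left
    have hsplit : ∀ p ∈ Finset.HasAntidiagonal.antidiagonal n,
        (if p.1 = 0 then a*b else Wsum 1 g g e d g p.1) * Wsum a 1 c d e g p.2
        = (if p.1 = 0 then 0 else Wsum 1 g g e d g p.1) * Wsum a 1 c d e g p.2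
          + (if p = ((0 : ℕ), n) then a * b * Wsum a 1 c d e g n else 0) := by
      intro p hp
      rw [Finset.HasAntidiagonal.mem_antidiagonal] at hp
      rcases Classical.em (p.1 = 0) with h1 | h1
      · have hpn : p = (0, n) := by
          apply Prod.ext h1
          simp only
          omega
        rw [if_pos h1, if_pos h1, if_pos hpn, zero_mul, zero_add, hpn]
      · have hpn : p ≠ (0, n) := fun hc => h1 (by rw [hc])
        rw [if_neg h1, if_neg h1, if_neg hpn, add_zero]
    rw [Finset.sum_congr rfl hsplit, Finset.sum_add_distrib, Finset.sum_ite_eq'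
      (Finset.HasAntidiagonal.antidiagonal n) ((0 : ℕ), n) (fun _ => a * b * Wsum a 1 c d e g n)]
    rw [if_pos (by rw [Finset.HasAntidiagonal.mem_antidiagonal]; omega)]
    rcases Classical.em (n = 0) with rfl | hn
    · rw [if_pos rfl, if_pos rfl, if_pos rfl, Wsum_zero]
      ring
    · rw [if_neg hn, if_neg hn, if_neg hn]
      ring


/-- `K` satisfies `uzK² − [1 − (u+v)z + uv(1−q)²z²]K + q²vz = 0`, and
`(1 − xuz − uzK)·J(x,t,s,u,v,q,z) = uz[xts + (1 − xu(1−t)(1−s)z)K]`. -/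
theorem Jser_eq :
    (PowerSeries.C (R := MvPolynomial (Fin 6) ℚ) uP6 * PowerSeries.X * Kser ^ 2
        - (1 - (PowerSeries.C (R := MvPolynomial (Fin 6) ℚ) uP6
              + PowerSeries.C (R := MvPolynomial (Fin 6) ℚ) vP6) * PowerSeries.X
            + PowerSeries.C (R := MvPolynomial (Fin 6) ℚ) uP6
              * PowerSeries.C (R := MvPolynomial (Fin 6) ℚ) vP6
              * (1 - PowerSeries.C (R := MvPolynomial (Fin 6) ℚ) qP6) ^ 2
              * PowerSeries.X ^ 2) * Kser
        + PowerSeries.C (R := MvPolynomial (Fin 6) ℚ) qP6 ^ 2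
          * PowerSeries.C (R := MvPolynomial (Fin 6) ℚ) vP6 * PowerSeries.X = 0) ∧
    (1 - PowerSeries.C (R := MvPolynomial (Fin 6) ℚ) xP6
          * PowerSeries.C (R := MvPolynomial (Fin 6) ℚ) uP6 * PowerSeries.X
        - PowerSeries.C (R := MvPolynomial (Fin 6) ℚ) uP6 * PowerSeries.X * Kser)
        * Jser xP6 tP6 sP6 uP6 vP6 qP6
      = PowerSeries.C (R := MvPolynomial (Fin 6) ℚ) uP6 * PowerSeries.X
        * (PowerSeries.C (R := MvPolynomial (Fin 6) ℚ) xP6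
            * PowerSeries.C (R := MvPolynomial (Fin 6) ℚ) tP6
            * PowerSeries.C (R := MvPolynomial (Fin 6) ℚ) sP6
          + (1 - PowerSeries.C (R := MvPolynomial (Fin 6) ℚ) xP6
              * PowerSeries.C (R := MvPolynomial (Fin 6) ℚ) uP6
              * (1 - PowerSeries.C (R := MvPolynomial (Fin 6) ℚ) tP6)
              * (1 - PowerSeries.C (R := MvPolynomial (Fin 6) ℚ) sP6) * PowerSeries.X) * Kser) := by
  classical
  have hKser : Kser = Jser 1 qP6 qP6 vP6 uP6 qP6 := rfl
  rw [hKser]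
  have e1 := master xP6 tP6 sP6 uP6 vP6 qP6
  have e2 := master xP6 1 sP6 uP6 vP6 qP6
  have e3 := master 1 qP6 qP6 vP6 uP6 qP6
  have e4 := master 1 1 qP6 vP6 uP6 qP6
  have e5 := master 1 qP6 qP6 uP6 vP6 qP6
  have e6 := master 1 1 qP6 uP6 vP6 qP6
  simp only [map_mul, map_one, one_mul, mul_one] at e1 e2 e3 e4 e5 e6
  set cq : PowerSeries (MvPolynomial (Fin 6) ℚ) := PowerSeries.C (R := MvPolynomial (Fin 6) ℚ) qP6 with hcq
  set cu : PowerSeries (MvPolynomial (Fin 6) ℚ) := PowerSeries.C (R := MvPolynomial (Fin 6) ℚ) uP6 with hcu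
  set cv : PowerSeries (MvPolynomial (Fin 6) ℚ) := PowerSeries.C (R := MvPolynomial (Fin 6) ℚ) vP6 with hcv
  set cx : PowerSeries (MvPolynomial (Fin 6) ℚ) := PowerSeries.C (R := MvPolynomial (Fin 6) ℚ) xP6 with hcx
  set ct : PowerSeries (MvPolynomial (Fin 6) ℚ) := PowerSeries.C (R := MvPolynomial (Fin 6) ℚ) tP6 with hct
  set cs : PowerSeries (MvPolynomial (Fin 6) ℚ) := PowerSeries.C (R := MvPolynomial (Fin 6) ℚ) sP6 with hcs
  set XX : PowerSeries (MvPolynomial (Fin 6) ℚ) := PowerSeries.X with hXX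
  set K : PowerSeries (MvPolynomial (Fin 6) ℚ) := Jser 1 qP6 qP6 vP6 uP6 qP6 with hK
  set Kh : PowerSeries (MvPolynomial (Fin 6) ℚ) := Jser 1 qP6 qP6 uP6 vP6 qP6 with hKh
  set L : PowerSeries (MvPolynomial (Fin 6) ℚ) := Jser 1 1 qP6 vP6 uP6 qP6 with hL
  set Lh : PowerSeries (MvPolynomial (Fin 6) ℚ) := Jser 1 1 qP6 uP6 vP6 qP6 with hLh
  set J : PowerSeries (MvPolynomial (Fin 6) ℚ) := Jser xP6 tP6 sP6 uP6 vP6 qP6 with hJ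
  set J1 : PowerSeries (MvPolynomial (Fin 6) ℚ) := Jser xP6 1 sP6 uP6 vP6 qP6 with hJ1
  have hEne : (1 - cq : PowerSeries (MvPolynomial (Fin 6) ℚ)) ≠ 0 := by
    intro h
    have h2 := congrArg (PowerSeries.constantCoeff (R := MvPolynomial (Fin 6) ℚ)) h
    rw [hcq] at h2
    simp only [map_sub, map_one, PowerSeries.constantCoeff_C, map_zero] at h2
    have h3 := congrArg (MvPolynomial.eval (fun _ => (0:ℚ))) h2
    simp [qP6] at h3
  have hIe : (1 - cq) * (K * (1 - cv * XX) - cq ^ 2 * (cv * XX))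
      = (1 - cq) * ((cv * XX) * Kh * (1 + K - (1 - cq)^2 * (cv * XX))) := by
    linear_combination ((1 - (cv*XX)*(1-cq)) - (cv*XX)*(1-cq)*Kh - cq) * e3
      + ((cv*XX)*(1-cq)*Kh - cq*(1-(cv*XX)*(1-cq)) + cq) * e4
  have hI : K * (1 - cv * XX) - cq ^ 2 * (cv * XX)
      = (cv * XX) * Kh * (1 + K - (1 - cq)^2 * (cv * XX)) :=
    mul_left_cancel₀ hEne hIe
  have hIIe : (1 - cq) * (Kh * (1 - cu * XX) - cq ^ 2 * (cu * XX))
      = (1 - cq) * ((cu * XX) * K * (1 + Kh - (1 - cq)^2 * (cu * XX))) := by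
    linear_combination ((1 - (cu*XX)*(1-cq)) - (cu*XX)*(1-cq)*K - cq) * e5
      + ((cu*XX)*(1-cq)*K - cq*(1-(cu*XX)*(1-cq)) + cq) * e6
  have hII : Kh * (1 - cu * XX) - cq ^ 2 * (cu * XX)
      = (cu * XX) * K * (1 + Kh - (1 - cq)^2 * (cu * XX)) :=
    mul_left_cancel₀ hEne hIIe
  have hUne : (1 - (cv * XX) * (cu * XX) * (1 - cq)^2
      : PowerSeries (MvPolynomial (Fin 6) ℚ)) ≠ 0 := by
    intro h
    have h2 := congrArg (PowerSeries.constantCoeff (R := MvPolynomial (Fin 6) ℚ)) h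
    rw [hXX] at h2
    simp only [map_sub, map_mul, map_one, PowerSeries.constantCoeff_X, mul_zero, zero_mul,
      map_zero] at h2
    simp at h2
  have hQU : (1 - (cv * XX) * (cu * XX) * (1 - cq)^2) *
      ((cu * XX) * K^2 - (1 - (cv * XX) - (cu * XX) + (cv * XX)*(cu * XX)*(1 - cq)^2) * K
        + cq ^ 2 * (cv * XX)) = 0 := by
    linear_combination (-(1 - (cu*XX) - (cu*XX)*K)) * hI
      + (-((cv*XX)*(1 + K - (1-cq)^2*(cv*XX)))) * hII
  have hQ : (cu * XX) * K^2
      - (1 - (cv * XX) - (cu * XX) + (cv * XX)*(cu * XX)*(1 - cq)^2) * K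
      + cq ^ 2 * (cv * XX) = 0 :=
    (mul_eq_zero.mp hQU).resolve_left hUne
  constructor
  · linear_combination hQ
  · linear_combination (1 - cx * cu * XX - cu * XX * K) * e1
      + (cu * XX * (cx * ct + K)) * e2


end DyckBij
end
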